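/- arXiv:2011.01560 — 7 statements merged into one kernel-verified Lean document; each statement's English description precedes it below -/
import Mathlib

section
/- Let h : (-∞,0) → ℝ be a convex function with h(x) → ∞ as x → 0⁻. Then h(x) = o(h'₊(x)) as x → 0⁻, where h'₊ denotes the right derivative of h (which exists at every point by convexity). -/
open Filter Set

/-- The right derivative of a function `h : ℝ → ℝ` at `x`. -/
noncomputable def rightDeriv (h : ℝ → ℝ) (x : ℝ) : ℝ := derivWithin h (Set.Ici x) x

/-- A convex function on `(-∞,0)` has a right derivative at every point, bounded below
by every slope from the left. -/
lemma rightDeriv_exists_aux (h : ℝ → ℝ) (hconv : ConvexOn ℝ (Set.Iio (0:ℝ)) h)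
    {x : ℝ} (hx : x < 0) :
    ∃ d : ℝ, HasDerivWithinAt h d (Set.Ici x) x ∧ ∀ y, y < x → slope h x y ≤ d := by
  have hmono := hconv.slope_mono hx
  have hsub : Set.Ioo x 0 ⊆ (Set.Iio (0:ℝ)) \ {x} := fun t ht => ⟨ht.2, ht.1.ne'⟩
  have hne : (Set.Ioo x (0:ℝ)).Nonempty := ⟨x / 2, by constructor <;> linarith⟩
  have hslope_le : ∀ y, y < x → ∀ t ∈ Set.Ioo x (0:ℝ), slope h x y ≤ slope h x t := by
    intro y hy t ht
    exact hmono ⟨hy.trans hx, hy.ne⟩ (hsub ht) (hy.le.trans ht.1.le)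
  have hbdd : BddBelow (slope h x '' Set.Ioo x 0) := by
    refine ⟨slope h x (x - 1), ?_⟩
    rintro _ ⟨t, ht, rfl⟩
    exact hslope_le (x - 1) (by linarith) t ht
  set d := sInf (slope h x '' Set.Ioo x 0) with hd
  have htend : Tendsto (slope h x) (nhdsWithin x (Set.Ioi x)) (nhds d) :=
    MonotoneOn.tendsto_nhdsWithin_Ioo_right hne (hmono.mono hsub) hbdd
  have hder : HasDerivWithinAt h d (Set.Ioi x) x := by
    rw [hasDerivWithinAt_iff_tendsto_slope' (notMem_Ioi_self)]
    exact htend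
  refine ⟨d, hder.Ici_of_Ioi, fun y hy => ?_⟩
  exact le_csInf (hne.image _) (by rintro _ ⟨t, ht, rfl⟩; exact hslope_le y hy t ht)

/-- If `h` is convex on `(-∞,0)` and `h(x) → ∞` as `x → 0⁻`, then
`h(x) = o(h'₊(x))` as `x → 0⁻`. -/
theorem convex_isLittleO_rightDeriv (h : ℝ → ℝ)
    (hconv : ConvexOn ℝ (Set.Iio (0:ℝ)) h)
    (hlim : Tendsto h (nhdsWithin 0 (Set.Iio 0)) atTop) :
    h =o[nhdsWithin 0 (Set.Iio 0)] (fun x => rightDeriv h x) := by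
  rw [Asymptotics.isLittleO_iff]
  intro c hc
  set m : ℝ := min (c / 2) 1 with hm
  have hm0 : 0 < m := lt_min (by linarith) one_pos
  have hmc : 2 * m ≤ c := by
    have : m ≤ c / 2 := min_le_left _ _
    linarith
  set y₀ : ℝ := -m with hy₀
  have hy₀0 : y₀ < 0 := by simpa [hy₀] using hm0
  have E2 : ∀ᶠ x in nhdsWithin 0 (Set.Iio 0), y₀ < x :=
    eventually_nhdsWithin_of_eventually_nhds (eventually_gt_nhds hy₀0)
  have E3 : ∀ᶠ x in nhdsWithin 0 (Set.Iio 0), 2 * |h y₀| + 2 ≤ h x :=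
    hlim.eventually_ge_atTop _
  filter_upwards [self_mem_nhdsWithin, E2, E3] with x hx1 hx2 hx3
  have hx : x < 0 := hx1
  obtain ⟨d, hder, hle⟩ := rightDeriv_exists_aux h hconv hx
  have hdeq : rightDeriv h x = d := by
    rw [rightDeriv]
    exact hder.derivWithin (uniqueDiffOn_Ici x x Set.self_mem_Ici)
  have hslope : slope h x y₀ ≤ d := hle y₀ hx2
  have hxy : 0 < x - y₀ := by linarith
  have hslope_eq : slope h x y₀ = (h x - h y₀) / (x - y₀) := by
    rw [slope_def_field]
    rw [div_eq_div_iff (by linarith) (by linarith : (x : ℝ) - y₀ ≠ 0)] <;> ring_nf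
  have hhalf : h x / 2 ≤ h x - h y₀ := by
    have : |h y₀| ≤ h x / 2 - 1 := by linarith
    have h2 : h y₀ ≤ |h y₀| := le_abs_self _
    linarith
  have hxy_le : x - y₀ ≤ m := by simp only [hy₀] at *; linarith
  have hhx : 0 < h x := by
    have : (0:ℝ) ≤ |h y₀| := abs_nonneg _
    linarith
  have key : h x / c ≤ d := by
    calc h x / c ≤ (h x / 2) / m := by
          rw [div_div]
          exact div_le_div_of_nonneg_left hhx.le (by positivity) (by linarith)
      _ ≤ (h x - h y₀) / (x - y₀) := by
          exact div_le_div₀ (by linarith) hhalf hxy hxy_le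
      _ = slope h x y₀ := hslope_eq.symm
      _ ≤ d := hslope
  have hd0 : 0 < d := lt_of_lt_of_le (by positivity) key
  rw [hdeq]
  rw [Real.norm_eq_abs, Real.norm_eq_abs, abs_of_pos hhx, abs_of_pos hd0]
  calc h x = c * (h x / c) := by field_simp
    _ ≤ c * d := by nlinarith [key]
end

section
/- Let h : (-∞,0) → ℝ be convex with h(x) → ∞ as x → 0⁻. Define α(g) = liminf_{x→0⁻} (log g(x))/log(1/|x|) and β(g) = limsup_{x→0⁻} (log g(x))/log(1/|x|) for a positive function g. Then α(h'₊) ≤ α(h) + 1, where h'₊ is the right derivative of h. -/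
open Filter Set

/-- `α(g) = liminf_{x→0⁻} log g(x) / log(1/|x|)`, as an extended real number. -/
noncomputable def alphaInd (g : ℝ → ℝ) : EReal :=
  Filter.liminf (fun x : ℝ => ((Real.log (g x) / Real.log (1 / |x|) : ℝ) : EReal))
    (nhdsWithin 0 (Set.Iio 0))

/-- `β(g) = limsup_{x→0⁻} log g(x) / log(1/|x|)`, as an extended real number. -/
noncomputable def betaInd (g : ℝ → ℝ) : EReal :=
  Filter.limsup (fun x : ℝ => ((Real.log (g x) / Real.log (1 / |x|) : ℝ) : EReal))
    (nhdsWithin 0 (Set.Iio 0))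

/-- For a convex function on `(-∞,0)`, any secant slope ending at `y` is at most
any value of the derivative within `Ioi y` at `y`. -/
lemma slope_le_rightDerivAux (h : ℝ → ℝ) (hconv : ConvexOn ℝ (Set.Iio (0:ℝ)) h)
    {x y d : ℝ} (hx : x < 0) (hy : y < 0) (hxy : x < y)
    (hd : HasDerivWithinAt h d (Set.Ioi y) y) : slope h x y ≤ d := by
  refine ge_of_tendsto ((hasDerivWithinAt_iff_tendsto_slope' notMem_Ioi_self).mp hd) ?_
  have h1 : ∀ᶠ t in nhdsWithin y (Set.Ioi y), t < 0 :=
    eventually_nhdsWithin_of_eventually_nhds (eventually_lt_nhds hy)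
  have h2 : ∀ᶠ t in nhdsWithin y (Set.Ioi y), t ∈ Set.Ioi y := eventually_mem_nhdsWithin
  filter_upwards [h1, h2] with t ht0 hyt
  have hmono := hconv.slope_mono (Set.mem_Iio.2 hy)
  have hle : slope h y x ≤ slope h y t := by
    refine hmono ⟨Set.mem_Iio.2 hx, ?_⟩ ⟨Set.mem_Iio.2 ht0, ?_⟩ (hxy.le.trans (le_of_lt hyt))
    · simpa using hxy.ne
    · simpa using (Set.mem_Ioi.1 hyt).ne'
  rwa [slope_comm] at hle

/-- If `h` is convex on `(-∞,0)` with `h(x) → ∞` as `x → 0⁻`, then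
`α(h'₊) ≤ α(h) + 1`. -/
theorem alpha_rightDeriv_le (h : ℝ → ℝ)
    (hconv : ConvexOn ℝ (Set.Iio (0:ℝ)) h)
    (hlim : Tendsto h (nhdsWithin 0 (Set.Iio 0)) atTop) :
    alphaInd (rightDeriv h) ≤ alphaInd h + 1 := by
  set l := nhdsWithin (0:ℝ) (Set.Iio 0) with hl
  -- log (1/|x|) tends to +∞ along l
  have hlogtend : Tendsto (fun x : ℝ => Real.log (1 / |x|)) l atTop := by
    have hmono : l ≤ nhdsWithin (0:ℝ) {0}ᶜ :=
      nhdsWithin_mono 0 (fun x hx => ne_of_lt hx)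
    have h1 : Tendsto Real.log l atBot :=
      Real.tendsto_log_nhdsNE_zero.mono_left hmono
    have h2 := tendsto_neg_atBot_atTop.comp h1
    refine h2.congr fun x => ?_
    simp only [Function.comp]
    rw [one_div, Real.log_inv, Real.log_abs]
  -- doubling map preserves the filter l
  have T2 : Tendsto (fun x : ℝ => 2 * x) l l := by
    rw [hl, tendsto_nhdsWithin_iff]
    constructor
    · have : Tendsto (fun x : ℝ => 2 * x) (nhds 0) (nhds (2 * 0)) :=
        (continuous_const.mul continuous_id).tendsto 0
      simpa using this.mono_left nhdsWithin_le_nhds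
    · exact eventually_mem_nhdsWithin.mono fun x hx => by
        simp only [Set.mem_Iio] at hx ⊢; linarith
  -- alphaInd h is nonnegative
  have hA0 : (0 : EReal) ≤ alphaInd h := by
    rw [alphaInd]
    apply Filter.le_liminf_of_le (by isBoundedDefault)
    filter_upwards [hlim.eventually_ge_atTop 1, hlogtend.eventually_ge_atTop 1] with x h1 h2
    have : (0:ℝ) ≤ Real.log (h x) / Real.log (1 / |x|) :=
      div_nonneg (Real.log_nonneg h1) (by linarith)
    exact_mod_cast this
  -- main claim
  suffices hmain : ∀ d : ℝ, alphaInd h + 1 < (d : EReal) → alphaInd (rightDeriv h) ≤ (d : EReal) by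
    by_contra hcon
    push_neg at hcon
    obtain ⟨c, hc1, hc2⟩ := EReal.exists_between_coe_real hcon
    exact absurd hc2 (not_lt.2 (hmain c hc1))
  intro d hd
  obtain ⟨d'', h1, h2⟩ := EReal.exists_between_coe_real hd
  have hd''d : d'' < d := by exact_mod_cast h2
  have h1d'' : 1 < d'' := by
    have hh : (1 : EReal) ≤ alphaInd h + 1 := by
      have := add_le_add_left hA0 (1 : EReal)
      simpa using this
    exact_mod_cast hh.trans_lt h1
  have hAlt : alphaInd h < ((d'' - 1 : ℝ) : EReal) := by
    by_contra hno
    push_neg at hno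
    have hstep : ((d'' - 1 : ℝ) : EReal) + 1 ≤ alphaInd h + 1 := add_le_add_left hno 1
    have h' : ((d'' : ℝ) : EReal) ≤ alphaInd h + 1 := by
      have : ((d'' - 1 : ℝ) : EReal) + 1 = ((d'' : ℝ) : EReal) := by
        norm_cast; ring
      rwa [this] at hstep
    exact absurd h1 (not_lt.2 h')
  have hfreq : ∃ᶠ x in l, ((Real.log (h x) / Real.log (1 / |x|) : ℝ) : EReal)
      < ((d'' - 1 : ℝ) : EReal) := by
    rw [alphaInd] at hAlt
    exact frequently_lt_of_liminf_lt (by isBoundedDefault) hAlt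
  set C := max (d * Real.log 2 / (d - d'')) (Real.log 2 + 1) with hCdef
  -- eventual properties at the doubled point
  have evAtY : ∀ᶠ y in l, y < 0 ∧ -1 < y ∧ 0 ≤ h y ∧ 1 ≤ slope h (-1) y := by
    have e1 : ∀ᶠ y in l, y ∈ Set.Iio (0:ℝ) := eventually_mem_nhdsWithin
    have e2 : ∀ᶠ y in l, -1 < y :=
      eventually_nhdsWithin_of_eventually_nhds (eventually_gt_nhds (by norm_num))
    have e3 := hlim.eventually_ge_atTop (h (-1) + 1)
    have e4 := hlim.eventually_ge_atTop 0
    filter_upwards [e1, e2, e3, e4] with y hy1 hy2 hy3 hy4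
    have hy0 : y < 0 := hy1
    refine ⟨hy0, hy2, hy4, ?_⟩
    have hb : 0 < y + 1 := by linarith
    have hb1 : y + 1 ≤ 1 := by linarith
    have hnum : 1 ≤ h y - h (-1) := by linarith
    have hs : slope h (-1) y = (h y - h (-1)) / (y + 1) := by
      rw [slope_def_field, sub_neg_eq_add]
    rw [hs]
    calc (1:ℝ) ≤ h y - h (-1) := hnum
      _ ≤ (h y - h (-1)) / (y + 1) := le_div_self (by linarith) hb hb1
  have evX : ∀ᶠ x in l, x ∈ Set.Iio (0:ℝ) ∧ 1 ≤ h x ∧ C ≤ Real.log (1 / |x|) ∧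
      (2*x < 0 ∧ -1 < 2*x ∧ 0 ≤ h (2*x) ∧ 1 ≤ slope h (-1) (2*x)) := by
    filter_upwards [eventually_mem_nhdsWithin, hlim.eventually_ge_atTop 1,
      hlogtend.eventually_ge_atTop C, T2.eventually evAtY] with x a b c e
    exact ⟨a, b, c, e⟩
  have hlog2pos : (0:ℝ) < Real.log 2 := Real.log_pos (by norm_num)
  -- pointwise estimate at frequent points, stated at 2*x
  have Fr : ∃ᶠ x in l,
      (fun y : ℝ => ((Real.log (rightDeriv h y) / Real.log (1 / |y|) : ℝ) : EReal) ≤ (d : EReal))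
        (2 * x) := by
    refine (hfreq.and_eventually evX).mono ?_
    rintro x ⟨hP, hx0', hx1, hCx, hy0, hym1, hhy, hsl⟩
    have hx0 : x < 0 := hx0'
    show ((Real.log (rightDeriv h (2*x)) / Real.log (1 / |2*x|) : ℝ) : EReal) ≤ (d : EReal)
    rw [EReal.coe_le_coe_iff]
    have hxneg : 0 < -x := by linarith
    have habsx : |x| = -x := abs_of_neg hx0
    have hLdef : Real.log (1 / |x|) = -Real.log (-x) := by
      rw [habsx, one_div, Real.log_inv]
    have hCge2 : Real.log 2 + 1 ≤ Real.log (1 / |x|) :=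
      le_trans (le_max_right _ _) hCx
    have hLpos : 0 < Real.log (1 / |x|) := by linarith
    have hL2 : Real.log (1 / |2*x|) = Real.log (1 / |x|) - Real.log 2 := by
      have habs2 : |2*x| = 2 * |x| := by rw [abs_mul]; norm_num
      rw [habs2, one_div, mul_inv, Real.log_mul (by norm_num)
        (inv_ne_zero (abs_ne_zero.2 hx0.ne)), Real.log_inv, ← one_div, one_div |x|]
      ring
    have hL2pos : 0 < Real.log (1 / |2*x|) := by rw [hL2]; linarith
    have hPr : Real.log (h x) < (d'' - 1) * Real.log (1 / |x|) := by
      have hPre : Real.log (h x) / Real.log (1 / |x|) < d'' - 1 := by exact_mod_cast hP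
      exact (div_lt_iff₀ hLpos).1 hPre
    by_cases hdiff : DifferentiableWithinAt ℝ h (Set.Ici (2*x)) (2*x)
    · have Hd : HasDerivWithinAt h (rightDeriv h (2*x)) (Set.Ici (2*x)) (2*x) :=
        hdiff.hasDerivWithinAt
      have Hioi := Hd.mono Set.Ioi_subset_Ici_self
      have hub : rightDeriv h (2*x) ≤ slope h (2*x) x :=
        hconv.le_slope_of_hasDerivWithinAt_Ioi (Set.mem_Iio.2 hy0) (Set.mem_Iio.2 hx0)
          (by linarith) Hioi
      have hslope : slope h (2*x) x = (h x - h (2*x)) / (-x) := by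
        rw [slope_def_field]
        congr 1
        ring
      have hub2 : rightDeriv h (2*x) ≤ h x / (-x) := by
        rw [hslope] at hub
        refine hub.trans ?_
        gcongr
        linarith
      have hlb : 1 ≤ rightDeriv h (2*x) :=
        le_trans hsl (slope_le_rightDerivAux h hconv (by norm_num) hy0 hym1 Hioi)
      have hNub : Real.log (rightDeriv h (2*x)) ≤ Real.log (h x) + Real.log (1 / |x|) := by
        have hd1 : Real.log (rightDeriv h (2*x)) ≤ Real.log (h x / (-x)) :=
          Real.log_le_log (by linarith) hub2
        rw [Real.log_div (by linarith : h x ≠ 0) (ne_of_gt hxneg)] at hd1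
        rw [hLdef]
        linarith
      have hNlb : 0 ≤ Real.log (rightDeriv h (2*x)) := Real.log_nonneg hlb
      rw [hL2, div_le_iff₀ (by linarith)]
      have key : Real.log (rightDeriv h (2*x)) ≤ d'' * Real.log (1 / |x|) := by nlinarith
      have key2 : d'' * Real.log (1 / |x|) ≤ d * (Real.log (1 / |x|) - Real.log 2) := by
        have hC1 : d * Real.log 2 / (d - d'') ≤ Real.log (1 / |x|) :=
          le_trans (le_max_left _ _) hCx
        have hdd : 0 < d - d'' := by linarith
        rw [div_le_iff₀ hdd] at hC1
        nlinarith
      linarith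
    · rw [rightDeriv, derivWithin_zero_of_not_differentiableWithinAt hdiff, Real.log_zero,
        zero_div]
      linarith
  have Fr2 : ∃ᶠ y in l,
      ((Real.log (rightDeriv h y) / Real.log (1 / |y|) : ℝ) : EReal) ≤ (d : EReal) :=
    (Filter.frequently_map.2 Fr).filter_mono T2
  rw [alphaInd]
  exact liminf_le_of_frequently_le' Fr2
end

section
/- Let h : (-∞,0) → ℝ be convex with h(x) → ∞ as x → 0⁻. Then β(h'₊) = β(h) + 1, where β(g) = limsup_{x→0⁻} (log g(x))/log(1/|x|) and h'₊ is the right derivative of h. -/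
open Filter Set

namespace BetaProof

/-- slope rewritten. -/
lemma slope_eq' (f : ℝ → ℝ) (a b : ℝ) : slope f a b = (f b - f a) / (b - a) := by
  rw [slope_def_field]

lemma bddBelow_slopes {h : ℝ → ℝ} (hconv : ConvexOn ℝ (Set.Iio (0:ℝ)) h) {x : ℝ} (hx : x < 0) :
    BddBelow (slope h x '' Ioo x 0) := by
  refine ⟨slope h x (x - 1), ?_⟩
  rintro b ⟨z, hz, rfl⟩
  rw [slope_eq', slope_eq']
  exact hconv.secant_mono hx (show x - 1 ∈ Iio (0:ℝ) by simp only [mem_Iio]; linarith)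
    (show z ∈ Iio (0:ℝ) from hz.2) (by intro hh; linarith [hh ▸ hz.1]) (ne_of_gt hz.1)
    (by linarith [hz.1])

lemma monotoneOn_slopes {h : ℝ → ℝ} (hconv : ConvexOn ℝ (Set.Iio (0:ℝ)) h) {x : ℝ} (hx : x < 0) :
    MonotoneOn (slope h x) (Ioo x 0) := by
  intro p hp q hq hpq
  rw [slope_eq', slope_eq']
  exact hconv.secant_mono hx (show p ∈ Iio (0:ℝ) from hp.2) (show q ∈ Iio (0:ℝ) from hq.2)
    (ne_of_gt hp.1) (ne_of_gt hq.1) hpq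

lemma hasRightDeriv {h : ℝ → ℝ} (hconv : ConvexOn ℝ (Set.Iio (0:ℝ)) h) {x : ℝ} (hx : x < 0) :
    HasDerivWithinAt h (sInf (slope h x '' Ioo x 0)) (Ici x) x := by
  rw [hasDerivWithinAt_iff_tendsto_slope, Ici_sdiff_left]
  exact MonotoneOn.tendsto_nhdsWithin_Ioo_right ⟨x/2, by constructor <;> linarith⟩
    (monotoneOn_slopes hconv hx) (bddBelow_slopes hconv hx)

lemma rightDeriv_eq_sInf {h : ℝ → ℝ} (hconv : ConvexOn ℝ (Set.Iio (0:ℝ)) h) {x : ℝ} (hx : x < 0) :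
    rightDeriv h x = sInf (slope h x '' Ioo x 0) :=
  (hasRightDeriv hconv hx).derivWithin (uniqueDiffOn_Ici x x self_mem_Ici)

lemma hasRightDeriv' {h : ℝ → ℝ} (hconv : ConvexOn ℝ (Set.Iio (0:ℝ)) h) {x : ℝ} (hx : x < 0) :
    HasDerivWithinAt h (rightDeriv h x) (Ici x) x := by
  rw [rightDeriv_eq_sInf hconv hx]; exact hasRightDeriv hconv hx

lemma rd_le_slope {h : ℝ → ℝ} (hconv : ConvexOn ℝ (Set.Iio (0:ℝ)) h) {x y : ℝ} (hx : x < 0)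
    (hy : y ∈ Ioo x 0) : rightDeriv h x ≤ slope h x y := by
  rw [rightDeriv_eq_sInf hconv hx]
  exact csInf_le (bddBelow_slopes hconv hx) (mem_image_of_mem _ hy)

lemma slope_le_rd {h : ℝ → ℝ} (hconv : ConvexOn ℝ (Set.Iio (0:ℝ)) h) {x y : ℝ} (hx : x < 0)
    (hy : y < 0) (hxy : x < y) : slope h x y ≤ rightDeriv h y := by
  rw [rightDeriv_eq_sInf hconv hy]
  refine le_csInf ⟨slope h y (y/2), mem_image_of_mem _ ⟨by linarith, by linarith⟩⟩ ?_
  rintro b ⟨z, hz, rfl⟩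
  rw [slope_eq', slope_eq']
  exact hconv.slope_mono_adjacent (show x ∈ Iio (0:ℝ) from hx) (show z ∈ Iio (0:ℝ) from hz.2)
    hxy hz.1

lemma L_tendsto : Tendsto (fun x : ℝ => Real.log (1 / |x|)) (nhdsWithin 0 (Set.Iio 0)) atTop := by
  have h1 : Tendsto (fun x : ℝ => |x|) (nhdsWithin 0 (Set.Iio 0)) (nhdsWithin 0 (Set.Ioi 0)) := by
    apply tendsto_nhdsWithin_of_tendsto_nhds_of_eventually_within
    · have : Tendsto (fun x : ℝ => |x|) (nhds 0) (nhds 0) := by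
        simpa using (continuous_abs.tendsto (0:ℝ))
      exact this.mono_left nhdsWithin_le_nhds
    · filter_upwards [self_mem_nhdsWithin] with x hx
      exact mem_Ioi.2 (abs_pos.2 (ne_of_lt (mem_Iio.1 hx)))
  have h2 : Tendsto (fun x : ℝ => 1 / |x|) (nhdsWithin 0 (Set.Iio 0)) atTop := by
    have h3 : Tendsto (fun y : ℝ => y⁻¹) (nhdsWithin 0 (Set.Ioi 0)) atTop :=
      tendsto_inv_nhdsGT_zero
    simpa [one_div, Function.comp_def] using h3.comp h1
  exact Real.tendsto_log_atTop.comp h2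

lemma rd_tendsto {h : ℝ → ℝ} (hconv : ConvexOn ℝ (Set.Iio (0:ℝ)) h)
    (hlim : Tendsto h (nhdsWithin 0 (Set.Iio 0)) atTop) :
    Tendsto (rightDeriv h) (nhdsWithin 0 (Set.Iio 0)) atTop := by
  rw [tendsto_atTop]
  intro M
  filter_upwards [hlim.eventually_ge_atTop (h (-1) + max M 0),
    Ioo_mem_nhdsLT (show (-1:ℝ) < 0 by norm_num)] with y hy hmem
  have hy0 : y < 0 := hmem.2
  have hy1 : -1 < y := hmem.1
  have h1 : slope h (-1) y ≤ rightDeriv h y :=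
    slope_le_rd hconv (by norm_num) hy0 hy1
  have h2 : M ≤ slope h (-1) y := by
    rw [slope_eq']
    have hpos : (0:ℝ) < y - (-1) := by linarith
    rw [le_div_iff₀ hpos]
    have hnum : max M 0 ≤ h y - h (-1) := by linarith
    rcases le_total M 0 with hM | hM
    · have : M * (y - (-1)) ≤ 0 := mul_nonpos_of_nonpos_of_nonneg hM (le_of_lt hpos)
      linarith [le_max_right M 0]
    · have : M * (y - (-1)) ≤ M * 1 := by
        apply mul_le_mul_of_nonneg_left _ hM; linarith
      have h3 : M ≤ max M 0 := le_max_left M 0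
      linarith
  linarith

lemma exists_Ioo {s : Set ℝ} (hs : s ∈ nhdsWithin 0 (Set.Iio 0)) :
    ∃ a : ℝ, a < 0 ∧ Ioo a 0 ⊆ s := by
  rw [mem_nhdsLT_iff_exists_Ioo_subset] at hs
  obtain ⟨a, ha, hsub⟩ := hs
  exact ⟨a, ha, hsub⟩

/-- helper: pointwise log bound gives limsup bound. -/
lemma limsup_ratio_le {g : ℝ → ℝ} {r K : ℝ}
    (hev : ∀ᶠ x in nhdsWithin 0 (Set.Iio 0),
      0 < Real.log (1 / |x|) ∧ Real.log (g x) ≤ r * Real.log (1 / |x|) + K) :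
    betaInd g ≤ (r : EReal) := by
  by_contra hcon
  push_neg at hcon
  obtain ⟨s, hs1, hs2⟩ := EReal.exists_between_coe_real hcon
  have hrs : r < s := by exact_mod_cast hs1
  have hε : 0 < s - r := sub_pos.2 hrs
  have hev2 : ∀ᶠ x in nhdsWithin 0 (Set.Iio 0), (|K| + 1) / (s - r) ≤ Real.log (1 / |x|) :=
    L_tendsto.eventually_ge_atTop _
  have hle : betaInd g ≤ (s : EReal) := by
    apply limsup_le_of_le (by isBoundedDefault)
    filter_upwards [hev, hev2] with x hx hbig
    obtain ⟨hL, hlog⟩ := hx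
    have h1 : Real.log (g x) / Real.log (1 / |x|) ≤ s := by
      rw [div_le_iff₀ hL]
      have h2 : |K| + 1 ≤ (s - r) * Real.log (1 / |x|) := by
        rw [div_le_iff₀ hε] at hbig
        nlinarith
      nlinarith [le_abs_self K]
    exact_mod_cast h1
  exact absurd (hs2.trans_le hle) (lt_irrefl _)

lemma exp_L {p x : ℝ} (hx : x < 0) :
    (-x) ^ (-p) = Real.exp (p * Real.log (1 / |x|)) := by
  rw [Real.rpow_def_of_pos (neg_pos.2 hx), abs_of_neg hx, one_div, Real.log_inv]
  congr 1
  ring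

lemma hasDerivAt_G (p : ℝ) (hp : p ≠ 1) {x : ℝ} (hx : x < 0) :
    HasDerivAt (fun y : ℝ => (p - 1)⁻¹ * (-y) ^ (1 - p)) ((-x) ^ (-p)) x := by
  have hne : (-x : ℝ) ≠ 0 := ne_of_gt (neg_pos.2 hx)
  have h1 : HasDerivAt (fun y : ℝ => -y) (-1 : ℝ) x := (hasDerivAt_id x).neg
  have h2 : HasDerivAt (fun y : ℝ => y ^ (1 - p)) ((1 - p) * (-x) ^ (1 - p - 1)) (-x) :=
    Real.hasDerivAt_rpow_const (Or.inl hne)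
  have h3 := (h2.comp x h1).const_mul ((p - 1)⁻¹)
  have heq : (p - 1)⁻¹ * ((1 - p) * (-x) ^ (1 - p - 1) * -1) = (-x) ^ (-p) := by
    rw [show (1:ℝ) - p - 1 = -p by ring]
    have hne1 : p - 1 ≠ 0 := sub_ne_zero.2 hp
    field_simp
    ring
  rw [heq] at h3
  exact h3

lemma key_compare {h : ℝ → ℝ} (hconv : ConvexOn ℝ (Set.Iio (0:ℝ)) h) (p : ℝ) (hp : p ≠ 1)
    {a : ℝ} (hbd : ∀ x ∈ Ioo a (0:ℝ), rightDeriv h x ≤ (-x) ^ (-p))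
    {u : ℝ} (hu : u ∈ Ioo a (0:ℝ)) :
    ∀ v ∈ Ioo u (0:ℝ), h v ≤ (h u - (p - 1)⁻¹ * (-u) ^ (1 - p)) + (p - 1)⁻¹ * (-v) ^ (1 - p) := by
  intro v hv
  set C : ℝ := h u - (p - 1)⁻¹ * (-u) ^ (1 - p) with hC
  set B : ℝ → ℝ := fun y => C + (p - 1)⁻¹ * (-y) ^ (1 - p) with hB
  have hv0 : v < 0 := hv.2
  have huv : u < v := hv.1
  have hBd : ∀ x ∈ Icc u v, HasDerivAt B ((-x) ^ (-p)) x := by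
    intro x hx
    exact (hasDerivAt_G p hp (lt_of_le_of_lt hx.2 hv0)).const_add C
  have hcont : ContinuousOn h (Icc u v) :=
    (hconv.continuousOn isOpen_Iio).mono (fun y hy => mem_Iio.2 (lt_of_le_of_lt hy.2 hv0))
  have hder : ∀ x ∈ Ico u v, HasDerivWithinAt h (rightDeriv h x) (Ici x) x :=
    fun x hx => hasRightDeriv' hconv (hx.2.trans hv0)
  have hau : h u ≤ B u := by simp [hB, hC]
  have hBcont : ContinuousOn B (Icc u v) :=
    fun x hx => (hBd x hx).continuousAt.continuousWithinAt
  have hBder : ∀ x ∈ Ico u v, HasDerivWithinAt B ((-x) ^ (-p)) (Ici x) x :=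
    fun x hx => (hBd x ⟨hx.1, hx.2.le⟩).hasDerivWithinAt
  have hbound : ∀ x ∈ Ico u v, rightDeriv h x ≤ (-x) ^ (-p) :=
    fun x hx => hbd x ⟨lt_of_lt_of_le hu.1 hx.1, hx.2.trans hv0⟩
  have key := image_le_of_deriv_right_le_deriv_boundary hcont hder hau hBcont hBder hbound
  exact key (right_mem_Icc.2 huv.le)

end BetaProof

open BetaProof

/-- If `h` is convex on `(-∞,0)` with `h(x) → ∞` as `x → 0⁻`, then
`β(h'₊) = β(h) + 1`. -/
theorem beta_rightDeriv_eq (h : ℝ → ℝ)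
    (hconv : ConvexOn ℝ (Set.Iio (0:ℝ)) h)
    (hlim : Tendsto h (nhdsWithin 0 (Set.Iio 0)) atTop) :
    betaInd (rightDeriv h) = betaInd h + 1 := by
  set l := nhdsWithin (0:ℝ) (Set.Iio 0) with hl
  -- β(h) ≥ 0
  have hβ0 : (0 : EReal) ≤ betaInd h := by
    refine le_limsup_of_frequently_le (Eventually.frequently ?_) (by isBoundedDefault)
    filter_upwards [hlim.eventually_ge_atTop 1, L_tendsto.eventually_gt_atTop 0] with x h1 h2
    have : (0:ℝ) ≤ Real.log (h x) / Real.log (1 / |x|) :=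
      div_nonneg (Real.log_nonneg h1) h2.le
    exact_mod_cast this
  -- upper bound per c
  have hUB1 : ∀ c : ℝ, betaInd h < (c : EReal) →
      betaInd (rightDeriv h) ≤ ((c + 1 : ℝ) : EReal) := by
    intro c hc
    have hev : ∀ᶠ x in l, Real.log (h x) / Real.log (1 / |x|) < c ∧ 1 ≤ h x ∧
        0 < Real.log (1 / |x|) ∧ 1 ≤ rightDeriv h x := by
      filter_upwards [eventually_lt_of_limsup_lt hc, hlim.eventually_ge_atTop 1,
        L_tendsto.eventually_gt_atTop 0,
        (rd_tendsto hconv hlim).eventually_ge_atTop 1] with x h1 h2 h3 h4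
      exact ⟨by exact_mod_cast h1, h2, h3, h4⟩
    obtain ⟨a, ha, hsub⟩ := exists_Ioo hev
    apply limsup_ratio_le (K := (c + 1) * Real.log 2)
    filter_upwards [Ioo_mem_nhdsLT ha] with x hx
    obtain ⟨hax, hx0⟩ := hx
    have hx2 : x / 2 ∈ Ioo a (0:ℝ) := ⟨by linarith, by linarith⟩
    obtain ⟨hr1, hh1, hL1, hrd1⟩ := hsub ⟨hax, hx0⟩
    obtain ⟨hr2, hh2, hL2, _⟩ := hsub hx2
    refine ⟨hL1, ?_⟩
    have hxne : x ≠ 0 := ne_of_lt hx0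
    have hnegpos : (0:ℝ) < -x := neg_pos.2 hx0
    have hpos : (0:ℝ) < x / 2 - x := by linarith
    have hs1 : rightDeriv h x ≤ slope h x (x / 2) :=
      rd_le_slope hconv hx0 ⟨by linarith, by linarith⟩
    have hb2 : slope h x (x / 2) ≤ h (x / 2) / (x / 2 - x) := by
      rw [slope_eq']
      exact (div_le_div_iff_of_pos_right hpos).mpr (by linarith)
    have hhalfpos : (0:ℝ) < h (x / 2) := by linarith
    have hlog1 : Real.log (rightDeriv h x) ≤ Real.log (h (x / 2) / (x / 2 - x)) :=
      Real.log_le_log (by linarith) (le_trans hs1 hb2)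
    have hlog2 : Real.log (h (x / 2) / (x / 2 - x)) =
        Real.log (h (x / 2)) - Real.log (x / 2 - x) :=
      Real.log_div (ne_of_gt hhalfpos) (ne_of_gt hpos)
    have hlog3 : Real.log (x / 2 - x) = Real.log (-x) - Real.log 2 := by
      rw [show x / 2 - x = (-x) / 2 by ring]
      exact Real.log_div (ne_of_gt hnegpos) two_ne_zero
    have hLx : Real.log (1 / |x|) = -Real.log (-x) := by
      rw [abs_of_neg hx0, one_div, Real.log_inv]
    have hL2eq : Real.log (1 / |x / 2|) = Real.log 2 + Real.log (1 / |x|) := by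
      rw [abs_of_neg (show x / 2 < 0 by linarith), abs_of_neg hx0]
      rw [show (1:ℝ) / -(x / 2) = 2 * (1 / -x) by field_simp]
      rw [Real.log_mul two_ne_zero (by positivity)]
    have hh2' : Real.log (h (x / 2)) < c * Real.log (1 / |x / 2|) := (div_lt_iff₀ hL2).1 hr2
    rw [hL2eq] at hh2'
    have : Real.log (rightDeriv h x) ≤
        Real.log (h (x / 2)) - Real.log (-x) + Real.log 2 := by
      rw [hlog2, hlog3] at hlog1; linarith
    rw [hLx] at hh2' ⊢
    nlinarith [Real.log_pos (by norm_num : (1:ℝ) < 2)]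
  -- lower bound per d
  have hL2' : ∀ d : ℝ, 1 < d → betaInd (rightDeriv h) < (d : EReal) →
      betaInd h ≤ ((d - 1 : ℝ) : EReal) := by
    intro d hd1 hd
    have hev : ∀ᶠ x in l, rightDeriv h x ≤ (-x) ^ (-d) := by
      filter_upwards [eventually_lt_of_limsup_lt hd,
        (rd_tendsto hconv hlim).eventually_ge_atTop 1,
        L_tendsto.eventually_gt_atTop 0, self_mem_nhdsWithin] with x h1 h2 h3 h4
      have h1' : Real.log (rightDeriv h x) / Real.log (1 / |x|) < d := by exact_mod_cast h1
      have h5 : Real.log (rightDeriv h x) < d * Real.log (1 / |x|) := (div_lt_iff₀ h3).1 h1'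
      have h6 := (Real.log_lt_iff_lt_exp (by linarith : (0:ℝ) < rightDeriv h x)).1 h5
      rw [exp_L (show x < 0 from h4)]
      exact h6.le
    obtain ⟨a, ha, hsub⟩ := exists_Ioo hev
    have hu : a / 2 ∈ Ioo a (0:ℝ) := ⟨by linarith, by linarith⟩
    set u := a / 2 with hu_def
    have hkey := key_compare hconv d (by linarith) (fun x hx => hsub hx) hu
    have hGu : (0:ℝ) < (d - 1)⁻¹ * (-u) ^ (1 - d) := by
      apply mul_pos (inv_pos.2 (by linarith))
      exact Real.rpow_pos_of_pos (by rw [hu_def]; linarith) _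
    -- h v ≤ h u + (d-1)⁻¹ * exp((d-1) L v)
    apply limsup_ratio_le (K := Real.log (|h u| + (d - 1)⁻¹ + 1))
    have hCpos : (0:ℝ) < |h u| + (d - 1)⁻¹ + 1 := by
      have h1 := abs_nonneg (h u)
      have h2 : (0:ℝ) < (d - 1)⁻¹ := inv_pos.2 (by linarith)
      linarith
    filter_upwards [Ioo_mem_nhdsLT (show u < 0 from hu.2),
      hlim.eventually_ge_atTop 1, L_tendsto.eventually_gt_atTop 0] with v hv hh1 hL1
    refine ⟨hL1, ?_⟩
    have hv0 : v < 0 := hv.2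
    have h1 := hkey v hv
    have hEeq : (-v) ^ (1 - d) = Real.exp ((d - 1) * Real.log (1 / |v|)) := by
      rw [show (1:ℝ) - d = -(d - 1) by ring]
      exact exp_L hv0
    set E := Real.exp ((d - 1) * Real.log (1 / |v|)) with hE
    have hE1 : (1:ℝ) ≤ E := by
      rw [hE]
      exact Real.one_le_exp (mul_nonneg (by linarith) hL1.le)
    have h2 : h v ≤ h u + (d - 1)⁻¹ * E := by
      rw [hEeq] at h1; linarith
    have h3 : h v ≤ (|h u| + (d - 1)⁻¹ + 1) * E := by
      have hinv : (0:ℝ) < (d - 1)⁻¹ := inv_pos.2 (by linarith)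
      nlinarith [le_abs_self (h u), abs_nonneg (h u)]
    have h4 : Real.log (h v) ≤ Real.log ((|h u| + (d - 1)⁻¹ + 1) * E) :=
      Real.log_le_log (by linarith) h3
    rw [Real.log_mul (ne_of_gt hCpos) (by positivity), hE, Real.log_exp] at h4
    linarith
  -- β(h'₊) ≥ 1
  have hβ'1 : (1 : EReal) ≤ betaInd (rightDeriv h) := by
    by_contra hcon
    push_neg at hcon
    obtain ⟨c, hc1, hc2⟩ := EReal.exists_between_coe_real hcon
    have hc1' : c < 1 := by exact_mod_cast hc2
    have hev : ∀ᶠ x in l, rightDeriv h x ≤ (-x) ^ (-c) := by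
      filter_upwards [eventually_lt_of_limsup_lt hc1,
        (rd_tendsto hconv hlim).eventually_ge_atTop 1,
        L_tendsto.eventually_gt_atTop 0, self_mem_nhdsWithin] with x h1 h2 h3 h4
      have h1' : Real.log (rightDeriv h x) / Real.log (1 / |x|) < c := by exact_mod_cast h1
      have h5 : Real.log (rightDeriv h x) < c * Real.log (1 / |x|) := (div_lt_iff₀ h3).1 h1'
      have h6 := (Real.log_lt_iff_lt_exp (by linarith : (0:ℝ) < rightDeriv h x)).1 h5
      rw [exp_L (show x < 0 from h4)]
      exact h6.le
    obtain ⟨a, ha, hsub⟩ := exists_Ioo hev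
    have hu : a / 2 ∈ Ioo a (0:ℝ) := ⟨by linarith, by linarith⟩
    set u := a / 2 with hu_def
    have hkey := key_compare hconv c (ne_of_lt hc1') (fun x hx => hsub hx) hu
    set A := h u - (c - 1)⁻¹ * (-u) ^ (1 - c) with hA
    have hboundA : ∀ᶠ v in l, h v ≤ A := by
      filter_upwards [Ioo_mem_nhdsLT (show u < 0 from hu.2)] with v hv
      have h1 := hkey v hv
      have h2 : (c - 1)⁻¹ * (-v) ^ (1 - c) ≤ 0 := by
        apply mul_nonpos_of_nonpos_of_nonneg
        · exact inv_nonpos.2 (by linarith)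
        · exact (Real.rpow_pos_of_pos (by linarith [hv.2] : (0:ℝ) < -v) _).le
      calc h v ≤ A + (c - 1)⁻¹ * (-v) ^ (1 - c) := h1
        _ ≤ A + 0 := by linarith
        _ = A := add_zero A
    obtain ⟨v, hv1, hv2⟩ := ((hlim.eventually_gt_atTop A).and hboundA).exists
    linarith
  -- assemble
  have hUB : betaInd (rightDeriv h) ≤ betaInd h + 1 := by
    rcases eq_or_ne (betaInd h) ⊤ with htop | hne
    · rw [htop]
      rw [show (⊤ : EReal) + 1 = ⊤ from rfl]
      exact le_top
    · have hnebot : betaInd h ≠ ⊥ := by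
        intro hbot
        exact absurd (hbot ▸ hβ0) (not_le.2 EReal.bot_lt_zero)
      set B := (betaInd h).toReal with hB
      have hBeq : betaInd h = (B : EReal) := (EReal.coe_toReal hne hnebot).symm
      by_contra hcon
      push_neg at hcon
      obtain ⟨t, ht1, ht2⟩ := EReal.exists_between_coe_real hcon
      have hBt : B + 1 < t := by
        rw [hBeq] at ht1
        exact_mod_cast ht1
      have hc : betaInd h < ((t - 1 : ℝ) : EReal) := by
        rw [hBeq]
        exact_mod_cast (by linarith : B < t - 1)
      have h2 := hUB1 (t - 1) hc
      rw [show t - 1 + 1 = t by ring] at h2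
      exact absurd (ht2.trans_le h2) (lt_irrefl _)
  have hLB : betaInd h + 1 ≤ betaInd (rightDeriv h) := by
    rcases eq_or_ne (betaInd (rightDeriv h)) ⊤ with htop | hne
    · rw [htop]; exact le_top
    · have hnebot : betaInd (rightDeriv h) ≠ ⊥ := by
        intro hbot
        have hb : (1 : EReal) ≤ ⊥ := hbot ▸ hβ'1
        exact absurd hb (not_le.2 (lt_of_lt_of_le EReal.bot_lt_zero zero_le_one))
      set D := (betaInd (rightDeriv h)).toReal with hD
      have hDeq : betaInd (rightDeriv h) = (D : EReal) := (EReal.coe_toReal hne hnebot).symm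
      have hD1 : (1:ℝ) ≤ D := by
        rw [hDeq] at hβ'1
        exact_mod_cast hβ'1
      have hβle : betaInd h ≤ ((D - 1 : ℝ) : EReal) := by
        by_contra hcon
        push_neg at hcon
        obtain ⟨s, hs1, hs2⟩ := EReal.exists_between_coe_real hcon
        have hs1' : D - 1 < s := by exact_mod_cast hs1
        have hd : (1:ℝ) < s + 1 := by linarith
        have h2 := hL2' (s + 1) hd (by rw [hDeq]; exact_mod_cast (by linarith : D < s + 1))
        rw [show s + 1 - 1 = s by ring] at h2
        exact absurd (hs2.trans_le h2) (lt_irrefl _)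
      calc betaInd h + 1 ≤ ((D - 1 : ℝ) : EReal) + 1 := by
            exact add_le_add_left hβle 1
        _ = (D : EReal) := by
            rw [show ((D - 1 : ℝ) : EReal) + 1 = ((D - 1 + 1 : ℝ) : EReal) by norm_cast,
              show D - 1 + 1 = D by ring]
        _ = betaInd (rightDeriv h) := hDeq.symm
  exact le_antisymm hUB hLB
end

section
/- Let h : (-∞,0) → ℝ be convex with h(x) → ∞ as x → 0⁻, and suppose α(h) < ∞ and β(h) > 0, where α(g) = liminf_{x→0⁻} (log g(x))/log(1/|x|) and β(g) = limsup_{x→0⁻} (log g(x))/log(1/|x|). Then α(h) + α(h)/β(h) ≤ α(h'₊), where h'₊ is the right derivative of h (with the convention α(h)/β(h) = 0 if β(h) = ∞). -/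
open Filter Set
open Topology

/- ### Auxiliary lemmas -/

/-- Secant slopes from the left are below the right derivative of a convex function. -/
lemma secant_le_rightDeriv {h : ℝ → ℝ} (hconv : ConvexOn ℝ (Set.Iio (0:ℝ)) h)
    {x y : ℝ} (hx : x < 0) (hyx : y < x) :
    (h x - h y) / (x - y) ≤ rightDeriv h x := by
  set A := sInf (slope h x '' Ioo x 0) with hA
  have hne : (Ioo x 0).Nonempty := ⟨x/2, by constructor <;> linarith⟩
  have key : ∀ z ∈ Ioo x 0, (h x - h y) / (x - y) ≤ slope h x z := by
    intro z hz
    rw [slope_def_field]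
    have := hconv.slope_mono_adjacent (show y ∈ Iio (0:ℝ) from hyx.trans hx)
      (show z ∈ Iio (0:ℝ) from hz.2) hyx hz.1
    exact this
  have hbdd : BddBelow (slope h x '' Ioo x 0) := by
    refine ⟨(h x - h y) / (x - y), ?_⟩
    rintro _ ⟨z, hz, rfl⟩
    exact key z hz
  have hmono : MonotoneOn (slope h x) (Ioo x 0) := by
    intro z₁ hz₁ z₂ hz₂ hle
    rw [slope_def_field, slope_def_field]
    exact hconv.secant_mono hx hz₁.2 hz₂.2 hz₁.1.ne' hz₂.1.ne' hle
  have htend : Tendsto (slope h x) (𝓝[>] x) (𝓝 A) :=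
    MonotoneOn.tendsto_nhdsWithin_Ioo_right hne hmono hbdd
  have hderiv : HasDerivWithinAt h A (Ici x) x := by
    rw [hasDerivWithinAt_iff_tendsto_slope, Ici_sdiff_left]
    exact htend
  have hrd : rightDeriv h x = A :=
    hderiv.derivWithin (uniqueDiffOn_Ici x x self_mem_Ici)
  rw [rightDeriv] at hrd ⊢
  rw [hrd]
  exact le_csInf (hne.image _) (by rintro _ ⟨z, hz, rfl⟩; exact key z hz)

lemma ev_basic : ∀ᶠ x in nhdsWithin (0:ℝ) (Set.Iio 0), -1 < x ∧ x < 0 := by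
  have h1 : ∀ᶠ x in nhdsWithin (0:ℝ) (Set.Iio 0), x ∈ Iio (0:ℝ) :=
    eventually_mem_nhdsWithin
  have h2 : ∀ᶠ x in nhdsWithin (0:ℝ) (Set.Iio 0), -1 < x :=
    eventually_nhdsWithin_of_eventually_nhds (eventually_gt_nhds (by norm_num))
  filter_upwards [h1, h2] with x hx1 hx2 using ⟨hx2, hx1⟩

lemma L_tendsto : Tendsto (fun x : ℝ => Real.log (1 / |x|))
    (nhdsWithin (0:ℝ) (Set.Iio 0)) atTop := by
  have habs : Tendsto (fun x : ℝ => |x|) (nhdsWithin (0:ℝ) (Set.Iio 0)) (𝓝[>] (0:ℝ)) := by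
    rw [tendsto_nhdsWithin_iff]
    constructor
    · have := (continuous_abs.tendsto (0:ℝ)).mono_left (nhdsWithin_le_nhds
        (s := Set.Iio (0:ℝ)))
      simpa using this
    · filter_upwards [eventually_mem_nhdsWithin] with x (hx : x < 0)
      exact abs_pos.2 hx.ne
  have := (Real.tendsto_log_atTop.comp (tendsto_inv_nhdsGT_zero.comp habs))
  refine this.congr fun x => ?_
  simp [one_div, Function.comp]

lemma tendsto_rpow_neg_zero {c : ℝ} (hc : 0 < c) :
    Tendsto (fun u : ℝ => u ^ (-c)) (𝓝[>] (0:ℝ)) atTop := by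
  have h2 := (tendsto_rpow_atTop hc).comp (tendsto_inv_nhdsGT_zero (𝕜 := ℝ))
  refine h2.congr' ?_
  filter_upwards [self_mem_nhdsWithin] with u (hu : (0:ℝ) < u)
  simp only [Function.comp]
  rw [Real.inv_rpow hu.le, ← Real.rpow_neg hu.le]

lemma ev_rpow_le {h : ℝ → ℝ} (hlim : Tendsto h (nhdsWithin 0 (Set.Iio 0)) atTop)
    {p : ℝ} (hp : (p : EReal) < alphaInd h) :
    ∀ᶠ x in nhdsWithin (0:ℝ) (Set.Iio 0), (-x) ^ (-p) ≤ h x := by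
  have h0 := eventually_lt_of_lt_liminf hp
  filter_upwards [h0, ev_basic, hlim.eventually_ge_atTop 1] with x hFx hx h1x
  obtain ⟨hx1, hx0⟩ := hx
  have hxpos : (0:ℝ) < -x := by linarith
  have hL : 0 < Real.log (1 / |x|) := by
    rw [abs_of_neg hx0]
    apply Real.log_pos
    rw [lt_div_iff₀ hxpos]
    linarith
  have hFx' : p < Real.log (h x) / Real.log (1 / |x|) := by exact_mod_cast hFx
  have hlog : p * Real.log (1 / |x|) < Real.log (h x) := (lt_div_iff₀ hL).1 hFx'
  have hlrw : Real.log ((-x) ^ (-p)) = p * Real.log (1 / |x|) := by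
    rw [Real.log_rpow hxpos, abs_of_neg hx0, one_div, Real.log_inv]
    ring
  calc (-x) ^ (-p) = Real.exp (Real.log ((-x) ^ (-p))) :=
        (Real.exp_log (Real.rpow_pos_of_pos hxpos _)).symm
    _ ≤ Real.exp (Real.log (h x)) := by
        apply Real.exp_le_exp.2
        rw [hlrw]; exact hlog.le
    _ = h x := Real.exp_log (by linarith)

lemma ev_le_rpow {h : ℝ → ℝ} (hlim : Tendsto h (nhdsWithin 0 (Set.Iio 0)) atTop)
    {b : ℝ} (hb : betaInd h < (b : EReal)) :
    ∀ᶠ x in nhdsWithin (0:ℝ) (Set.Iio 0), h x ≤ (-x) ^ (-b) := by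
  have h0 := eventually_lt_of_limsup_lt hb
  filter_upwards [h0, ev_basic, hlim.eventually_ge_atTop 1] with x hFx hx h1x
  obtain ⟨hx1, hx0⟩ := hx
  have hxpos : (0:ℝ) < -x := by linarith
  have hL : 0 < Real.log (1 / |x|) := by
    rw [abs_of_neg hx0]
    apply Real.log_pos
    rw [lt_div_iff₀ hxpos]
    linarith
  have hFx' : Real.log (h x) / Real.log (1 / |x|) < b := by exact_mod_cast hFx
  have hlog : Real.log (h x) < b * Real.log (1 / |x|) := (div_lt_iff₀ hL).1 hFx'
  have hlrw : Real.log ((-x) ^ (-b)) = b * Real.log (1 / |x|) := by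
    rw [Real.log_rpow hxpos, abs_of_neg hx0, one_div, Real.log_inv]
    ring
  calc h x = Real.exp (Real.log (h x)) := (Real.exp_log (by linarith)).symm
    _ ≤ Real.exp (Real.log ((-x) ^ (-b))) := by
        apply Real.exp_le_exp.2
        rw [hlrw]; exact hlog.le
    _ = (-x) ^ (-b) := Real.exp_log (Real.rpow_pos_of_pos hxpos _)

/-- Core estimate. -/
lemma core_estimate {h : ℝ → ℝ} (hconv : ConvexOn ℝ (Set.Iio (0:ℝ)) h)
    (hlim : Tendsto h (nhdsWithin 0 (Set.Iio 0)) atTop)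
    {θ p ε : ℝ} (hθ0 : 0 ≤ θ) (hθ1 : θ < 1) (hε : 0 < ε)
    (H1 : ∀ᶠ x in nhdsWithin (0:ℝ) (Set.Iio 0), (-x) ^ (-p) ≤ h x)
    (H2 : ∀ᶠ x in nhdsWithin (0:ℝ) (Set.Iio 0), 2 * h (-((-x) ^ θ)) ≤ h x) :
    ((p + θ - ε : ℝ) : EReal) ≤ alphaInd (rightDeriv h) := by
  apply le_liminf_of_le (by isBoundedDefault)
  have hev : ∀ᶠ x in nhdsWithin (0:ℝ) (Set.Iio 0),
      Real.log 2 / ε ≤ Real.log (1 / |x|) := L_tendsto.eventually_ge_atTop _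
  filter_upwards [H1, H2, ev_basic, hlim.eventually_ge_atTop 1, hev]
    with x h1 h2 hx hx1 hL2
  obtain ⟨hxm1, hx0⟩ := hx
  set u : ℝ := -x with hu
  have hu0 : (0:ℝ) < u := by simp [hu]; linarith
  have hu1 : u < 1 := by simp [hu]; linarith
  set y : ℝ := -(u ^ θ) with hy
  have huθpos : (0:ℝ) < u ^ θ := Real.rpow_pos_of_pos hu0 _
  have hyx : y < x := by
    have : u ^ (1:ℝ) < u ^ θ := Real.rpow_lt_rpow_of_exponent_gt hu0 hu1 hθ1
    rw [Real.rpow_one] at this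
    simp only [hy, hu] at *
    linarith
  have hL : 0 < Real.log (1 / |x|) := by
    rw [abs_of_neg hx0]
    apply Real.log_pos
    rw [lt_div_iff₀ (by linarith : (0:ℝ) < -x)]
    linarith
  have hlog2 : Real.log 2 ≤ ε * Real.log (1 / |x|) := by
    rw [div_le_iff₀ hε] at hL2
    linarith [hL2]
  -- bound the right derivative from below
  have hsec := secant_le_rightDeriv hconv hx0 hyx
  have hhy : h y ≤ h x / 2 := by linarith
  have hd0 : 0 < x - y := by linarith
  have hd1 : x - y ≤ u ^ θ := by
    simp only [hy, hu]
    linarith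
  have hrd : h x / (2 * u ^ θ) ≤ rightDeriv h x := by
    refine le_trans ?_ hsec
    rw [div_le_div_iff₀ (by positivity) hd0]
    nlinarith [hx1, hd0, hd1, huθpos]
  have hrdpos : 0 < rightDeriv h x := lt_of_lt_of_le (by positivity) hrd
  -- take logs
  have hlogu : Real.log u = -Real.log (1 / |x|) := by
    rw [abs_of_neg hx0, one_div, Real.log_inv, neg_neg, hu]
  have hloghx : p * Real.log (1 / |x|) ≤ Real.log (h x) := by
    have h' := Real.log_le_log (Real.rpow_pos_of_pos (by linarith : (0:ℝ) < -x) _) h1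
    rw [Real.log_rpow (by linarith : (0:ℝ) < -x)] at h'
    have hlx : Real.log (-x) = -Real.log (1 / |x|) := by
      rw [show Real.log (-x) = Real.log u by rw [hu], hlogu]
    rw [hlx] at h'
    linarith [h']
  have hlogrd : p * Real.log (1 / |x|) - Real.log 2 + θ * Real.log (1 / |x|)
      ≤ Real.log (rightDeriv h x) := by
    have hstep := Real.log_le_log (by positivity : (0:ℝ) < h x / (2 * u ^ θ)) hrd
    rw [Real.log_div (by linarith) (by positivity), Real.log_mul (by norm_num)
      (ne_of_gt huθpos), Real.log_rpow hu0, hlogu] at hstep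
    nlinarith [hloghx]
  -- conclude
  show ((p + θ - ε : ℝ) : EReal) ≤ ((Real.log (rightDeriv h x) / Real.log (1 / |x|) : ℝ) : EReal)
  rw [EReal.coe_le_coe_iff, le_div_iff₀ hL]
  nlinarith [hlogrd, hlog2, hL]

/-- If `h` is convex on `(-∞,0)` with `h(x) → ∞` as `x → 0⁻`, `α(h) < ∞` and
`β(h) > 0`, then `α(h) + α(h)/β(h) ≤ α(h'₊)` (in `EReal`, where division by `∞`
gives `0`). -/
theorem alpha_add_div_beta_le_alpha_rightDeriv (h : ℝ → ℝ)
    (hconv : ConvexOn ℝ (Set.Iio (0:ℝ)) h)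
    (hlim : Tendsto h (nhdsWithin 0 (Set.Iio 0)) atTop)
    (halpha : alphaInd h < ⊤) (hbeta : 0 < betaInd h) :
    alphaInd h + alphaInd h / betaInd h ≤ alphaInd (rightDeriv h) := by
  set l := nhdsWithin (0:ℝ) (Set.Iio 0) with hl
  set α := alphaInd h with hαdef
  set β := betaInd h with hβdef
  -- α ≥ 0
  have hα0 : (0 : EReal) ≤ α := by
    apply le_liminf_of_le (by isBoundedDefault)
    filter_upwards [ev_basic, hlim.eventually_ge_atTop 1] with x hx hx1
    obtain ⟨hxm1, hx0⟩ := hx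
    have hL : 0 < Real.log (1 / |x|) := by
      rw [abs_of_neg hx0]
      apply Real.log_pos
      rw [lt_div_iff₀ (by linarith : (0:ℝ) < -x)]
      linarith
    have : (0:ℝ) ≤ Real.log (h x) / Real.log (1 / |x|) :=
      div_nonneg (Real.log_nonneg hx1) hL.le
    exact_mod_cast this
  have hαtop : α ≠ ⊤ := halpha.ne
  have hαbot : α ≠ ⊥ := fun hb => by simp [hb] at hα0
  set a := α.toReal with hadef
  have hαa : α = (a : EReal) := (EReal.coe_toReal hαtop hαbot).symm
  have ha0 : 0 ≤ a := by
    have := hα0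
    rw [hαa] at this
    exact_mod_cast this
  have hαβ : α ≤ β := liminf_le_limsup
  -- reduce to real inequalities
  rw [← EReal.ge_of_forall_gt_iff_ge]
  intro r hr
  by_cases hra : (r : EReal) < α
  · -- θ = 0 branch
    obtain ⟨p, hrp, hpα⟩ := EReal.exists_between_coe_real hra
    have hε : (0:ℝ) < p - r := by
      have : (r : EReal) < (p : EReal) := hrp
      have := EReal.coe_lt_coe_iff.1 this
      linarith
    have H1 := ev_rpow_le hlim hpα
    have H2 : ∀ᶠ x in l, 2 * h (-((-x) ^ (0:ℝ))) ≤ h x := by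
      filter_upwards [hlim.eventually_ge_atTop (2 * h (-1))] with x hx
      simpa [Real.rpow_zero] using hx
    have := core_estimate hconv hlim le_rfl one_pos hε H1 H2
    have heq : (p + 0 - (p - r) : ℝ) = r := by ring
    rwa [heq] at this
  · -- r ≥ α
    push_neg at hra
    have hβtop : β ≠ ⊤ := by
      intro hβ
      rw [hβ, EReal.div_top, add_zero] at hr
      exact absurd hr (not_lt.2 hra)
    have hβbot : β ≠ ⊥ := fun hb => by simp [hb] at hbeta
    set b := β.toReal with hbdef
    have hβb : β = (b : EReal) := (EReal.coe_toReal hβtop hβbot).symm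
    have hb0 : (0:ℝ) < b := by
      have := hbeta; rw [hβb] at this; exact_mod_cast this
    have hab : a ≤ b := by
      have := hαβ; rw [hαa, hβb] at this; exact_mod_cast this
    have hr' : r < a + a / b := by
      rw [hαa, hβb, ← EReal.coe_div, ← EReal.coe_add] at hr
      exact_mod_cast hr
    have hra' : a ≤ r := by
      rw [hαa] at hra; exact_mod_cast hra
    have ha0' : 0 < a := by
      rcases eq_or_lt_of_le ha0 with heq | hlt
      · exfalso
        rw [← heq] at hr' hra'
        simp at hr'
        linarith
      · exact hlt
    -- choice of parameters
    obtain ⟨s, hs⟩ : ∃ s : ℝ, s = a + a / b - r := ⟨_, rfl⟩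
    have hs0 : 0 < s := by rw [hs]; linarith
    have hsab : s ≤ a / b := by rw [hs]; linarith
    obtain ⟨θ, hθ⟩ : ∃ θ : ℝ, θ = a / b - s / 2 := ⟨_, rfl⟩
    have habpos : 0 < a / b := div_pos ha0' hb0
    have hθ0 : 0 < θ := by rw [hθ]; linarith
    have hθ1 : θ < 1 := by
      have h1 : a / b ≤ 1 := (div_le_one hb0).2 hab
      rw [hθ]; linarith
    obtain ⟨b', hb'⟩ : ∃ b' : ℝ, b' = b + s * b / (4 * θ) := ⟨_, rfl⟩
    have hbb' : b < b' := by
      have h1 : 0 < s * b / (4 * θ) := by positivity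
      rw [hb']; linarith
    obtain ⟨p, hp⟩ : ∃ p : ℝ, p = a - min (3 * s / 8) (s * b / 8) := ⟨_, rfl⟩
    have hminpos : 0 < min (3 * s / 8) (s * b / 8) := by positivity
    have hpa : p < a := by rw [hp]; linarith [hminpos]
    have hθb' : θ * b' < p := by
      have hθne : θ ≠ 0 := ne_of_gt hθ0
      have hbne : b ≠ 0 := ne_of_gt hb0
      have e1 : θ * (b + s * b / (4 * θ)) = θ * b + s * b / 4 := by
        field_simp
      have e2 : θ * b = a - s * b / 2 := by
        rw [hθ]
        field_simp
      have h1 : θ * b' = a - s * b / 4 := by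
        rw [hb', e1, e2]; ring
      have h2 : min (3 * s / 8) (s * b / 8) ≤ s * b / 8 := min_le_right _ _
      have h3 : s * b / 8 < s * b / 4 := by nlinarith
      rw [h1, hp]
      linarith
    have hptarget : r ≤ p + θ - s / 8 := by
      have h2 : min (3 * s / 8) (s * b / 8) ≤ 3 * s / 8 := min_le_left _ _
      simp only [hp, hθ, hs] at *
      linarith
    -- H1
    have hpα : (p : EReal) < α := by rw [hαa]; exact_mod_cast hpa
    have H1 := ev_rpow_le hlim hpα
    -- H2
    have hb'β : β < (b' : EReal) := by rw [hβb]; exact_mod_cast hbb'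
    have Hb' := ev_le_rpow hlim hb'β
    have hytend : Tendsto (fun x : ℝ => -((-x) ^ θ)) l l := by
      rw [hl, tendsto_nhdsWithin_iff]
      constructor
      · have hneg : Tendsto (fun x : ℝ => -x) l (𝓝 (0:ℝ)) := by
          have := (continuous_neg.tendsto (0:ℝ)).mono_left
            (nhdsWithin_le_nhds (s := Set.Iio (0:ℝ)))
          simpa using this
        have hpow : Tendsto (fun z : ℝ => z ^ θ) (𝓝 (0:ℝ)) (𝓝 (0:ℝ)) := by
          have := (Real.continuousAt_rpow_const 0 θ (Or.inr hθ0.le)).tendsto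
          rwa [Real.zero_rpow hθ0.ne'] at this
        have := (hpow.comp hneg).neg
        simpa using this
      · filter_upwards [eventually_mem_nhdsWithin] with x (hx : x < 0)
        have : (0:ℝ) < (-x) ^ θ := Real.rpow_pos_of_pos (by linarith) _
        simpa using this
    have H2a : ∀ᶠ x in l, h (-((-x) ^ θ)) ≤ (-x) ^ (-(θ * b')) := by
      filter_upwards [hytend.eventually Hb', eventually_mem_nhdsWithin]
        with x h1 (hx : x < 0)
      have hxpos : (0:ℝ) < -x := by linarith
      rw [neg_neg] at h1
      calc h (-((-x) ^ θ)) ≤ ((-x) ^ θ) ^ (-b') := h1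
        _ = (-x) ^ (-(θ * b')) := by
            rw [← Real.rpow_mul hxpos.le]
            ring_nf
    have H2b : ∀ᶠ x in l, 2 * (-x) ^ (-(θ * b')) ≤ (-x) ^ (-p) := by
      have hc : 0 < p - θ * b' := by linarith
      have hneg : Tendsto (fun x : ℝ => -x) l (𝓝[>] (0:ℝ)) := by
        rw [tendsto_nhdsWithin_iff]
        constructor
        · have := (continuous_neg.tendsto (0:ℝ)).mono_left
            (nhdsWithin_le_nhds (s := Set.Iio (0:ℝ)))
          simpa using this
        · filter_upwards [eventually_mem_nhdsWithin] with x (hx : x < 0)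
          simpa using hx
      have htend := (tendsto_rpow_neg_zero hc).comp hneg
      filter_upwards [htend.eventually_ge_atTop 2, eventually_mem_nhdsWithin]
        with x h2 (hx : x < 0)
      have hxpos : (0:ℝ) < -x := by linarith
      have key : (-x) ^ (-p) = (-x) ^ (-(p - θ * b')) * (-x) ^ (-(θ * b')) := by
        rw [← Real.rpow_add hxpos]
        ring_nf
      rw [key]
      have hpos : (0:ℝ) ≤ (-x) ^ (-(θ * b')) := (Real.rpow_pos_of_pos hxpos _).le
      have h2' : (2:ℝ) ≤ (-x) ^ (-(p - θ * b')) := h2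
      exact mul_le_mul_of_nonneg_right h2' hpos
    have H2 : ∀ᶠ x in l, 2 * h (-((-x) ^ θ)) ≤ h x := by
      filter_upwards [H1, H2a, H2b] with x h1 h2a h2b
      linarith
    have hε8 : (0:ℝ) < s / 8 := by linarith
    have := core_estimate hconv hlim hθ0.le hθ1 hε8 H1 H2
    refine le_trans ?_ this
    exact_mod_cast hptarget
end

section
/- Let f be analytic and unbounded in the unit disc 𝔻, with maximum modulus M(r,f) = max_{|z|=r}|f(z)|. Define K(r,f) = r·(log M(r,f))'₊ (right derivative), λ_M(f) = liminf_{r→1⁻} log⁺log⁺M(r,f)/log(1/(1-r)), and λ_*(f) = liminf_{r→1⁻} log⁺K(r,f)/log(1/(1-r)). Then λ_*(f) ≤ λ_M(f) + 1. -/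
open Filter Set

/-- Maximum modulus `M(r,f) = max_{|z|=r} |f(z)|`. -/
noncomputable def maxMod (f : ℂ → ℂ) (r : ℝ) : ℝ :=
  sSup ((fun z => ‖f z‖) '' Metric.sphere (0:ℂ) r)

/-- `log⁺ x = max (log x) 0`. -/
noncomputable def logPlus (x : ℝ) : ℝ := max (Real.log x) 0

/-- Lower order of growth `λ_M(f)`. -/
noncomputable def lowerOrder (f : ℂ → ℂ) : EReal :=
  Filter.liminf
    (fun r : ℝ => ((logPlus (logPlus (maxMod f r)) / Real.log (1 / (1 - r)) : ℝ) : EReal))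
    (nhdsWithin 1 (Set.Iio 1))

/-- Order of growth `σ_M(f)`. -/
noncomputable def upperOrder (f : ℂ → ℂ) : EReal :=
  Filter.limsup
    (fun r : ℝ => ((logPlus (logPlus (maxMod f r)) / Real.log (1 / (1 - r)) : ℝ) : EReal))
    (nhdsWithin 1 (Set.Iio 1))

/-- `K(r,f) = r · (log M(r,f))'₊`, using the right derivative. -/
noncomputable def Kfun (f : ℂ → ℂ) (r : ℝ) : ℝ :=
  r * derivWithin (fun t => Real.log (maxMod f t)) (Set.Ici r) r

/-- `λ_*(f) = liminf_{r→1⁻} log⁺ K(r,f) / log(1/(1-r))`. -/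
noncomputable def lowerStar (f : ℂ → ℂ) : EReal :=
  Filter.liminf
    (fun r : ℝ => ((logPlus (Kfun f r) / Real.log (1 / (1 - r)) : ℝ) : EReal))
    (nhdsWithin 1 (Set.Iio 1))

/-! ### Auxiliary lemmas -/

section Aux

lemma sphere_subset_unit_ball {r : ℝ} (h1 : r < 1) :
    Metric.sphere (0:ℂ) r ⊆ Metric.ball (0:ℂ) 1 := by
  intro z hz
  rw [Metric.mem_sphere] at hz
  rw [Metric.mem_ball, hz]
  exact h1

lemma maxMod_bddAbove {f : ℂ → ℂ} (hf : DifferentiableOn ℂ f (Metric.ball (0:ℂ) 1))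
    {r : ℝ} (h1 : r < 1) :
    BddAbove ((fun z => ‖f z‖) '' Metric.sphere (0:ℂ) r) := by
  apply (isCompact_sphere (0:ℂ) r).bddAbove_image
  exact continuous_norm.comp_continuousOn
    (hf.continuousOn.mono (sphere_subset_unit_ball h1))

lemma le_maxMod {f : ℂ → ℂ} (hf : DifferentiableOn ℂ f (Metric.ball (0:ℂ) 1))
    {r : ℝ} (h1 : r < 1) {z : ℂ} (hz : z ∈ Metric.sphere (0:ℂ) r) :
    ‖f z‖ ≤ maxMod f r :=
  le_csSup (maxMod_bddAbove hf h1) (mem_image_of_mem _ hz)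

lemma maxMod_mono {f : ℂ → ℂ} (hf : DifferentiableOn ℂ f (Metric.ball (0:ℂ) 1))
    {r s : ℝ} (hr : 0 ≤ r) (hrs : r ≤ s) (hs0 : 0 < s) (hs1 : s < 1) :
    maxMod f r ≤ maxMod f s := by
  have hne : ((fun z => ‖f z‖) '' Metric.sphere (0:ℂ) r).Nonempty :=
    (NormedSpace.sphere_nonempty.mpr hr).image _
  apply csSup_le hne
  rintro v ⟨z, hz, rfl⟩
  have hzc : z ∈ closure (Metric.ball (0:ℂ) s) := by
    rw [closure_ball (0:ℂ) hs0.ne']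
    exact Metric.closedBall_subset_closedBall hrs (Metric.sphere_subset_closedBall hz)
  have key := Complex.norm_le_of_forall_mem_frontier_norm_le (U := Metric.ball (0:ℂ) s)
    Metric.isBounded_ball
    ⟨hf.mono (Metric.ball_subset_ball hs1.le), hf.continuousOn.mono (by
      rw [closure_ball (0:ℂ) hs0.ne']; exact Metric.closedBall_subset_ball hs1)⟩
    (C := maxMod f s) (fun w hw => by
      rw [frontier_ball (0:ℂ) hs0.ne'] at hw
      simpa using le_maxMod hf hs1 hw) hzc
  simpa using key

lemma maxMod_eventually_ge {f : ℂ → ℂ} (hf : DifferentiableOn ℂ f (Metric.ball (0:ℂ) 1))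
    (hunb : ¬ BddAbove ((fun z => ‖f z‖) '' Metric.ball (0:ℂ) 1)) (C : ℝ) :
    ∀ᶠ r in nhdsWithin (1:ℝ) (Set.Iio 1), C ≤ maxMod f r := by
  obtain ⟨v, ⟨z, hz, rfl⟩, hv⟩ := not_bddAbove_iff.mp hunb C
  have hz1 : ‖z‖ < 1 := by simpa [Metric.mem_ball, dist_zero_right] using hz
  filter_upwards [Ioo_mem_nhdsLT_of_mem (show (1:ℝ) ∈ Ioc ‖z‖ 1 from ⟨hz1, le_refl 1⟩)]
    with r hr
  have h2 : ‖f z‖ ≤ maxMod f ‖z‖ :=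
    le_maxMod hf hz1 (by simp [Metric.mem_sphere, dist_zero_right])
  refine hv.le.trans (h2.trans (maxMod_mono hf (norm_nonneg z) hr.1.le ?_ hr.2))
  exact lt_of_le_of_lt (norm_nonneg z) hr.1

/-- A monotone function has, somewhere in `[a,b)`, a right derivative (in the `derivWithin`
sense, which is `0` when the function is not right-differentiable) bounded by slope + 1. -/
lemma exists_rderiv_le {g : ℝ → ℝ} {a b : ℝ} (hab : a < b)
    (hmono : MonotoneOn g (Icc a b)) :
    ∃ x ∈ Ico a b, derivWithin g (Ici x) x ≤ (g b - g a) / (b - a) + 1 := by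
  by_contra hcon
  push_neg at hcon
  set C : ℝ := (g b - g a) / (b - a) + 1 with hCdef
  have hslope : 0 ≤ (g b - g a) / (b - a) :=
    div_nonneg (sub_nonneg.mpr (hmono (left_mem_Icc.mpr hab.le) (right_mem_Icc.mpr hab.le) hab.le))
      (sub_nonneg.mpr hab.le)
  have hC : 0 < C := lt_of_le_of_lt hslope (lt_add_one _)
  have hdiff : ∀ x ∈ Ico a b, HasDerivWithinAt g (derivWithin g (Ici x) x) (Ici x) x := by
    intro x hx
    rcases em (DifferentiableWithinAt ℝ g (Ici x) x) with h | h
    · exact h.hasDerivWithinAt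
    · exfalso
      have h2 := hcon x hx
      rw [derivWithin_zero_of_not_differentiableWithinAt h] at h2
      exact absurd h2 (not_lt.mpr hC.le)
  set S : Set ℝ := {x | x ∈ Icc a b ∧ C * (x - a) ≤ g x - g a} with hS
  have haS : a ∈ S := ⟨left_mem_Icc.mpr hab.le, by simp⟩
  have hSbdd : BddAbove S := ⟨b, fun x hx => hx.1.2⟩
  set c := sSup S with hc
  have hcIcc : c ∈ Icc a b := ⟨le_csSup hSbdd haS, csSup_le ⟨a, haS⟩ fun x hx => hx.1.2⟩
  have hcS : c ∈ S := by
    refine ⟨hcIcc, ?_⟩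
    by_contra hlt
    push_neg at hlt
    obtain ⟨δ, hδpos, hCδ⟩ : ∃ δ : ℝ, 0 < δ ∧ C * δ = C * (c - a) - (g c - g a) :=
      ⟨(C * (c - a) - (g c - g a)) / C, div_pos (by linarith) hC, mul_div_cancel₀ _ hC.ne'⟩
    obtain ⟨x, hxS, hx⟩ := exists_lt_of_lt_csSup (⟨a, haS⟩ : S.Nonempty)
      (show c - δ < sSup S from by rw [← hc]; linarith)
    have hxc : x ≤ c := le_csSup hSbdd hxS
    have h1 : g x - g a ≤ g c - g a := sub_le_sub_right (hmono hxS.1 hcIcc hxc) _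
    have h2 : C * (x - a) ≤ g x - g a := hxS.2
    have h3 : C * (c - δ) < C * x := mul_lt_mul_of_pos_left hx hC
    nlinarith [h3, hCδ, h1, h2]
  have hcb : ¬ c < b := by
    intro hcb
    have hD := hdiff c ⟨hcIcc.1, hcb⟩
    have hDC : C < derivWithin g (Ici c) c := hcon c ⟨hcIcc.1, hcb⟩
    rw [hasDerivWithinAt_iff_tendsto_slope, Set.Ici_sdiff_left] at hD
    have hev1 : ∀ᶠ x in nhdsWithin c (Ioi c), C < slope g c x :=
      hD.eventually (eventually_gt_nhds hDC)
    have hev2 : ∀ᶠ x in nhdsWithin c (Ioi c), x < b :=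
      eventually_nhdsWithin_of_eventually_nhds (eventually_lt_nhds hcb)
    have hev3 : ∀ᶠ x in nhdsWithin c (Ioi c), c < x := eventually_mem_nhdsWithin
    obtain ⟨x, hx1, hx2, hx3⟩ := (hev1.and (hev2.and hev3)).exists
    obtain ⟨hxb, hcx⟩ := hx2, hx3
    rw [slope_def_field] at hx1
    have hxgc : C * (x - c) < g x - g c := by
      have := (lt_div_iff₀ (sub_pos.mpr hx3)).mp hx1
      linarith
    have hxS : x ∈ S := by
      refine ⟨⟨hcIcc.1.trans hx3.le, hx2.le⟩, ?_⟩
      have := hcS.2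
      nlinarith [hxgc, hcS.2]
    exact absurd (le_csSup hSbdd hxS) (not_le.mpr hx3)
  have hcb' : c = b := le_antisymm hcIcc.2 (not_lt.mp hcb)
  have hfin := hcS.2
  rw [hcb'] at hfin
  have hcan : (g b - g a) / (b - a) * (b - a) = g b - g a :=
    div_mul_cancel₀ _ (sub_ne_zero.mpr hab.ne')
  have e : C * (b - a) = (g b - g a) / (b - a) * (b - a) + (b - a) := by rw [hCdef]; ring
  rw [hcan] at e
  linarith [hfin, e]

lemma rderiv_nonneg {g : ℝ → ℝ} {x b : ℝ} (hxb : x < b) (hmono : MonotoneOn g (Icc x b)) :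
    0 ≤ derivWithin g (Ici x) x := by
  rcases em (DifferentiableWithinAt ℝ g (Ici x) x) with h | h
  · have hD := h.hasDerivWithinAt
    rw [hasDerivWithinAt_iff_tendsto_slope, Set.Ici_sdiff_left] at hD
    refine ge_of_tendsto hD ?_
    have hev2 : ∀ᶠ y in nhdsWithin x (Ioi x), y < b :=
      eventually_nhdsWithin_of_eventually_nhds (eventually_lt_nhds hxb)
    have hev3 : ∀ᶠ y in nhdsWithin x (Ioi x), x < y := eventually_mem_nhdsWithin
    filter_upwards [hev2, hev3] with y h2 h3
    rw [slope_def_field]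
    exact div_nonneg (sub_nonneg.mpr
      (hmono (left_mem_Icc.mpr hxb.le) ⟨h3.le, h2.le⟩ h3.le)) (by linarith)
  · rw [derivWithin_zero_of_not_differentiableWithinAt h]

lemma tendsto_logOneSub :
    Tendsto (fun r : ℝ => Real.log (1 / (1 - r))) (nhdsWithin 1 (Set.Iio 1)) atTop := by
  apply Real.tendsto_log_atTop.comp
  have h1 : Tendsto (fun r : ℝ => 1 - r) (nhdsWithin 1 (Set.Iio 1))
      (nhdsWithin 0 (Set.Ioi 0)) := by
    apply tendsto_nhdsWithin_of_tendsto_nhds_of_eventually_within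
    · have hc : Continuous (fun r : ℝ => 1 - r) := by continuity
      have h := hc.tendsto 1
      simp only [sub_self] at h
      exact h.mono_left nhdsWithin_le_nhds
    · exact eventually_mem_nhdsWithin.mono fun r hr => by
        simp only [mem_Iio] at hr; simp only [mem_Ioi]; linarith
  have h2 := tendsto_inv_nhdsGT_zero.comp h1
  simpa [one_div, Function.comp_def] using h2

end Aux

set_option maxHeartbeats 1600000 in
/-- If `f` is analytic and unbounded in the unit disc, then `λ_*(f) ≤ λ_M(f) + 1`. -/
theorem lowerStar_le_lowerOrder_add_one (f : ℂ → ℂ)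
    (hf : DifferentiableOn ℂ f (Metric.ball (0:ℂ) 1))
    (hunb : ¬ BddAbove ((fun z => ‖f z‖) '' Metric.ball (0:ℂ) 1)) :
    lowerStar f ≤ lowerOrder f + 1 := by
  -- choose r0 ∈ [1/2, 1) beyond which maxMod ≥ e
  obtain ⟨l, hl1, hl⟩ := mem_nhdsLT_iff_exists_Ioo_subset.mp
    (maxMod_eventually_ge hf hunb (Real.exp 1))
  set r0 : ℝ := max l (1/2) with hr0def
  have hr0half : (1/2 : ℝ) ≤ r0 := le_max_right _ _
  have hr01 : r0 < 1 := by
    rw [hr0def]; exact max_lt hl1 (by norm_num)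
  have hbig : ∀ r ∈ Ioo r0 1, Real.exp 1 ≤ maxMod f r := by
    intro r hr
    exact hl ⟨lt_of_le_of_lt (le_max_left _ _) hr.1, hr.2⟩
  have hMpos : ∀ r ∈ Ioo r0 1, 0 < maxMod f r := fun r hr =>
    lt_of_lt_of_le (Real.exp_pos 1) (hbig r hr)
  have hF1 : ∀ r ∈ Ioo r0 1, 1 ≤ Real.log (maxMod f r) := fun r hr =>
    (Real.le_log_iff_exp_le (hMpos r hr)).mpr (hbig r hr)
  have hmonoF : ∀ {a b : ℝ}, r0 < a → b < 1 →
      MonotoneOn (fun t => Real.log (maxMod f t)) (Icc a b) := by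
    intro a b ha hb x hx y hy hxy
    have hx0 : r0 < x := lt_of_lt_of_le ha hx.1
    have hy1 : y < 1 := lt_of_le_of_lt hy.2 hb
    have hx1 : x < 1 := lt_of_le_of_lt hxy hy1
    have hy0 : r0 < y := lt_of_lt_of_le hx0 hxy
    exact Real.log_le_log (hMpos x ⟨hx0, hx1⟩)
      (maxMod_mono hf (by linarith) hxy (by linarith) hy1)
  -- lowerOrder is nonnegative
  have horder0 : (0:EReal) ≤ lowerOrder f := by
    unfold lowerOrder
    apply Filter.le_liminf_of_le (by isBoundedDefault)
    filter_upwards [Ioo_mem_nhdsLT_of_mem (show (1:ℝ) ∈ Ioc r0 1 from ⟨hr01, le_refl 1⟩)]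
      with r hr
    have hr1 : 0 < 1 - r := by linarith [hr.2]
    have hL0 : 0 ≤ Real.log (1 / (1 - r)) :=
      Real.log_nonneg (one_le_one_div hr1 (by linarith [hr.1, hr0half]))
    have : (0:ℝ) ≤ logPlus (logPlus (maxMod f r)) / Real.log (1 / (1 - r)) :=
      div_nonneg (le_max_right _ _) hL0
    exact_mod_cast this
  by_contra hcontra
  push_neg at hcontra
  obtain ⟨y, hy1, hy2⟩ := EReal.lt_iff_exists_real_btwn.mp hcontra
  refine absurd ?_ (not_le.mpr hy2)
  -- lowerOrder f < y - 1, pick real lam between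
  have hy1' : lowerOrder f < ((y - 1 : ℝ) : EReal) := by
    rw [EReal.coe_sub, EReal.coe_one]
    exact (EReal.lt_sub_iff_add_lt (Or.inl (by rw [← EReal.coe_one]; exact EReal.coe_ne_bot 1))
      (Or.inl (by rw [← EReal.coe_one]; exact EReal.coe_ne_top 1))).mpr hy1
  obtain ⟨lam, hlam1, hlam2'⟩ := EReal.exists_between_coe_real hy1'
  have hlam2 : lam < y - 1 := by exact_mod_cast hlam2'
  have hlam0 : 0 < lam := by
    have := lt_of_le_of_lt horder0 hlam1
    exact_mod_cast this
  -- frequently small order quotient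
  have hfreq : ∃ᶠ r in nhdsWithin (1:ℝ) (Set.Iio 1),
      ((logPlus (logPlus (maxMod f r)) / Real.log (1 / (1 - r)) : ℝ) : EReal) < (lam : EReal) :=
    Filter.frequently_lt_of_liminf_lt (by isBoundedDefault) hlam1
  set T : ℝ := (Real.log 2 * (1 + y)) / (y - 1 - lam) with hTdef
  have hev : ∀ᶠ r in nhdsWithin (1:ℝ) (Set.Iio 1),
      r ∈ Ioo ((1 + r0)/2) 1 ∧ max T (Real.log 2 + 1) ≤ Real.log (1 / (1 - r)) := by
    refine Filter.Eventually.and ?_ (tendsto_logOneSub.eventually_ge_atTop _)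
    exact Filter.eventually_of_mem (Ioo_mem_nhdsLT_of_mem (show (1:ℝ) ∈ Ioc ((1 + r0)/2) 1 from
      ⟨by linarith, le_refl 1⟩)) (fun x hx => hx)
  have hfreq2 := hfreq.and_eventually hev
  -- show lowerStar f ≤ y
  unfold lowerStar
  apply Filter.liminf_le_of_frequently_le'
  rw [Filter.frequently_iff]
  intro U hU
  obtain ⟨l', hl'1, hl'sub⟩ := mem_nhdsLT_iff_exists_Ioo_subset.mp hU
  rw [mem_Iio] at hl'1
  have hevU : ∀ᶠ r in nhdsWithin (1:ℝ) (Set.Iio 1), r ∈ Ioo ((1 + max l' r0)/2) 1 :=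
    Filter.eventually_of_mem (Ioo_mem_nhdsLT_of_mem (show (1:ℝ) ∈ Ioc ((1 + max l' r0)/2) 1 from
      ⟨by have := max_lt hl'1 hr01; linarith, le_refl 1⟩)) (fun x hx => hx)
  obtain ⟨r, ⟨hq, hIoo, hT⟩, hU'⟩ := (hfreq2.and_eventually hevU).exists
  rw [mem_Iio] at hl1
  -- basic facts about r
  have hrIoo : r ∈ Ioo r0 1 := ⟨by have := hIoo.1; linarith, hIoo.2⟩
  have hr1 : r < 1 := hrIoo.2
  have hr0r : r0 < r := hrIoo.1
  have ha0 : r0 < 2*r - 1 := by have := hU'.1; have := le_max_right l' r0; linarith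
  have hab : 2*r - 1 < r := by linarith
  have h1r : 0 < 1 - r := by linarith
  set Lr : ℝ := Real.log (1 / (1 - r)) with hLrdef
  have hLrlog2 : Real.log 2 + 1 ≤ Lr := le_trans (le_max_right _ _) hT
  have hTLr : T ≤ Lr := le_trans (le_max_left _ _) hT
  have hlog2pos : (0:ℝ) < Real.log 2 := Real.log_pos (by norm_num)
  have hLrpos : 0 < Lr := by linarith
  -- monotonicity of log maxMod on [2r-1, r]
  have hmono := hmonoF ha0 hr1
  obtain ⟨x, hxIco, hxD⟩ := exists_rderiv_le hab hmono
  have hx0 : r0 < x := lt_of_lt_of_le ha0 hxIco.1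
  have hxr : x < r := hxIco.2
  have hx1 : x < 1 := lt_trans hxr hr1
  have hxpos : 0 < x := by linarith [hr0half]
  -- K at x is nonnegative and ≤ right derivative
  have hDnn : 0 ≤ derivWithin (fun t => Real.log (maxMod f t)) (Ici x) x :=
    rderiv_nonneg hxr (hmonoF hx0 hr1)
  have hK0 : 0 ≤ Kfun f x := mul_nonneg hxpos.le hDnn
  have hKle : Kfun f x ≤ derivWithin (fun t => Real.log (maxMod f t)) (Ici x) x := by
    unfold Kfun
    exact mul_le_of_le_one_left hDnn (by linarith)
  -- bound the slope
  have hFa : 1 ≤ Real.log (maxMod f (2*r - 1)) := hF1 _ ⟨ha0, by linarith⟩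
  have hFr1 : 1 ≤ Real.log (maxMod f r) := hF1 r hrIoo
  have hba : r - (2*r - 1) = 1 - r := by ring
  have hslope : (Real.log (maxMod f r) - Real.log (maxMod f (2*r - 1))) / (r - (2*r - 1))
      ≤ Real.log (maxMod f r) / (1 - r) := by
    rw [hba]
    exact div_le_div_of_nonneg_right (by linarith) h1r.le
  -- from the frequent hypothesis: log (log maxMod r) < lam * Lr
  have hq' : logPlus (logPlus (maxMod f r)) / Lr < lam := by exact_mod_cast hq
  have hlogP1 : logPlus (maxMod f r) = Real.log (maxMod f r) :=
    max_eq_left (by linarith)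
  have hlogP2 : logPlus (logPlus (maxMod f r)) = Real.log (Real.log (maxMod f r)) := by
    rw [hlogP1]
    exact max_eq_left (Real.log_nonneg hFr1)
  rw [hlogP2] at hq'
  have hloglog : Real.log (Real.log (maxMod f r)) < lam * Lr :=
    (div_lt_iff₀ hLrpos).mp hq'
  have hFrexp : Real.log (maxMod f r) < Real.exp (lam * Lr) := by
    calc Real.log (maxMod f r) = Real.exp (Real.log (Real.log (maxMod f r))) :=
          (Real.exp_log (by linarith)).symm
    _ < Real.exp (lam * Lr) := Real.exp_lt_exp.mpr hloglog
  have hexpLr : 1 / (1 - r) = Real.exp Lr := (Real.exp_log (by positivity)).symm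
  have hFrdiv : Real.log (maxMod f r) / (1 - r) ≤ Real.exp ((lam + 1) * Lr) := by
    have h1 : Real.log (maxMod f r) / (1 - r) = Real.log (maxMod f r) * (1 / (1 - r)) := by
      ring
    rw [h1, hexpLr]
    have h2 : Real.log (maxMod f r) * Real.exp Lr ≤ Real.exp (lam * Lr) * Real.exp Lr :=
      mul_le_mul_of_nonneg_right hFrexp.le (Real.exp_pos _).le
    calc Real.log (maxMod f r) * Real.exp Lr ≤ Real.exp (lam * Lr) * Real.exp Lr := h2
    _ = Real.exp (lam * Lr + Lr) := (Real.exp_add _ _).symm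
    _ = Real.exp ((lam + 1) * Lr) := by ring_nf
  -- combine: K x ≤ exp((lam+1) Lr) + 1
  have hKbound : Kfun f x ≤ Real.exp ((lam + 1) * Lr) + 1 := by
    calc Kfun f x ≤ derivWithin (fun t => Real.log (maxMod f t)) (Ici x) x := hKle
    _ ≤ (Real.log (maxMod f r) - Real.log (maxMod f (2*r - 1))) / (r - (2*r - 1)) + 1 := hxD
    _ ≤ Real.log (maxMod f r) / (1 - r) + 1 := by linarith [hslope]
    _ ≤ Real.exp ((lam + 1) * Lr) + 1 := by linarith [hFrdiv]
  -- logPlus bound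
  have hA0 : 0 ≤ (lam + 1) * Lr := mul_nonneg (by linarith) hLrpos.le
  have hexpA1 : 1 ≤ Real.exp ((lam + 1) * Lr) := Real.one_le_exp hA0
  have hargpos : (0:ℝ) < Real.exp ((lam + 1) * Lr) + 1 := by positivity
  have hlogarg : 0 ≤ Real.log (Real.exp ((lam + 1) * Lr) + 1) :=
    Real.log_nonneg (by linarith)
  have hlogPK : logPlus (Kfun f x) ≤ (lam + 1) * Lr + Real.log 2 := by
    have step1 : logPlus (Kfun f x) ≤ Real.log (Real.exp ((lam + 1) * Lr) + 1) := by
      unfold logPlus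
      apply max_le _ hlogarg
      rcases hK0.eq_or_lt with h | h
      · rw [← h, Real.log_zero]; exact hlogarg
      · exact Real.log_le_log h hKbound
    have step2 : Real.log (Real.exp ((lam + 1) * Lr) + 1)
        ≤ Real.log (2 * Real.exp ((lam + 1) * Lr)) :=
      Real.log_le_log hargpos (by linarith)
    have step3 : Real.log (2 * Real.exp ((lam + 1) * Lr))
        = Real.log 2 + (lam + 1) * Lr := by
      rw [Real.log_mul (by norm_num) (Real.exp_pos _).ne', Real.log_exp]
    linarith
  -- denominator bound
  have hx2r : 2*r - 1 ≤ x := hxIco.1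
  have h1x : 0 < 1 - x := by linarith
  have hLx : Lr - Real.log 2 ≤ Real.log (1 / (1 - x)) := by
    have h1 : 1 / (2 * (1 - r)) ≤ 1 / (1 - x) := by
      apply one_div_le_one_div_of_le h1x
      linarith
    have h2 : Real.log (1 / (2 * (1 - r))) ≤ Real.log (1 / (1 - x)) :=
      Real.log_le_log (by positivity) h1
    have h3 : (1:ℝ) / (2 * (1 - r)) = (1 / (1 - r)) / 2 := by rw [div_div, mul_comm]
    have h4 : Real.log ((1 / (1 - r)) / 2) = Lr - Real.log 2 :=
      Real.log_div (by positivity) (by norm_num)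
    rw [h3, h4] at h2
    exact h2
  have hLxpos : 0 < Real.log (1 / (1 - x)) := by linarith
  have hLrl2 : 0 < Lr - Real.log 2 := by linarith
  -- final quotient bound
  have hydenom : 0 < y - 1 - lam := by linarith
  have hylam : lam + 1 < y := by linarith
  have hy0 : 0 < y := by linarith
  have hTineq : Real.log 2 * (1 + y) ≤ Lr * (y - 1 - lam) := by
    have := (div_le_iff₀ hydenom).mp hTLr
    linarith
  have hfinal : logPlus (Kfun f x) / Real.log (1 / (1 - x)) ≤ y := by
    have hnum0 : 0 ≤ (lam + 1) * Lr + Real.log 2 := by linarith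
    have h5 : logPlus (Kfun f x) / Real.log (1 / (1 - x))
        ≤ ((lam + 1) * Lr + Real.log 2) / (Lr - Real.log 2) :=
      div_le_div₀ hnum0 hlogPK hLrl2 hLx
    have h6 : ((lam + 1) * Lr + Real.log 2) / (Lr - Real.log 2) ≤ y := by
      rw [div_le_iff₀ hLrl2]
      linarith [hTineq]
    linarith
  refine ⟨x, ?_, ?_⟩
  · apply hl'sub
    refine ⟨?_, hx1⟩
    have := hU'.1
    have := le_max_left l' r0
    linarith
  · exact_mod_cast hfinal
end

section
/- Let σ > 0 and q ∈ (0,1). If 0 < δ < exp(-1/(σ(1-q))), then the series ∑_{m=1}^∞ exp(-1/δ^{σ q^{1-m}}) converges and its sum is strictly less than 1. -/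
lemma exp_neg_le_inv (x : ℝ) (hx : 0 < x) : Real.exp (-x) ≤ x⁻¹ := by
  rw [Real.exp_neg]
  exact inv_anti₀ hx (x.add_one_le_exp.trans' (by linarith))

/-- Let `σ > 0`, `q ∈ (0,1)` and `0 < δ < exp(-1/(σ(1-q)))`.  Then the series
`∑_{m=1}^∞ exp(-1/δ^{σ q^{1-m}})` converges and its sum is strictly less than `1`.
(The series is indexed by `m : ℕ`, with the term of index `m` corresponding to
the original index `m + 1`.) -/
theorem sum_exp_neg_rpow_lt_one (sigma q delta : ℝ) (hsigma : 0 < sigma)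
    (hq : q ∈ Set.Ioo (0:ℝ) 1) (hdelta : 0 < delta)
    (hdelta' : delta < Real.exp (-1 / (sigma * (1 - q)))) :
    Summable (fun m : ℕ => Real.exp (-1 / delta ^ (sigma * q ^ (1 - ((m : ℝ) + 1))))) ∧
    ∑' m : ℕ, Real.exp (-1 / delta ^ (sigma * q ^ (1 - ((m : ℝ) + 1)))) < 1 := by
  obtain ⟨hq0, hq1⟩ := hq
  set L : ℝ := -Real.log delta with hL
  have hq1' : (0:ℝ) < 1 - q := by linarith
  have hL1 : 1 / (sigma * (1 - q)) < L := by
    have := Real.log_lt_log hdelta hdelta'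
    rw [Real.log_exp] at this
    have : Real.log delta < -1 / (sigma * (1 - q)) := this
    rw [hL]; rw [neg_div] at this; linarith
  have hLpos : 0 < L := lt_trans (by positivity) hL1
  have hbound : ∀ m : ℕ, Real.exp (-1 / delta ^ (sigma * q ^ (1 - ((m : ℝ) + 1))))
      ≤ (sigma * L)⁻¹ * q ^ m := by
    intro m
    set E : ℝ := sigma * q ^ (1 - ((m : ℝ) + 1)) with hE
    have hEpos : 0 < E := by
      have : (0:ℝ) < q ^ (1 - ((m : ℝ) + 1)) := Real.rpow_pos_of_pos hq0 _
      positivity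
    have hT : (0:ℝ) < delta ^ E := Real.rpow_pos_of_pos hdelta _
    have h1 : Real.exp (-1 / delta ^ E) ≤ delta ^ E := by
      have := exp_neg_le_inv ((delta ^ E)⁻¹) (by positivity)
      rw [inv_inv] at this
      calc Real.exp (-1 / delta ^ E) = Real.exp (-(delta ^ E)⁻¹) := by
            rw [neg_div, one_div]
        _ ≤ delta ^ E := this
    have h2 : delta ^ E = Real.exp (-(E * L)) := by
      rw [Real.rpow_def_of_pos hdelta]
      rw [hL]; ring_nf
    have h3 : Real.exp (-(E * L)) ≤ (E * L)⁻¹ :=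
      exp_neg_le_inv _ (by positivity)
    have h4 : (E * L)⁻¹ = (sigma * L)⁻¹ * q ^ m := by
      rw [hE]
      have : (1 - ((m : ℝ) + 1)) = -(m : ℝ) := by ring
      rw [this, Real.rpow_neg hq0.le, Real.rpow_natCast]
      field_simp
    calc Real.exp (-1 / delta ^ E) ≤ delta ^ E := h1
      _ = Real.exp (-(E * L)) := h2
      _ ≤ (E * L)⁻¹ := h3
      _ = (sigma * L)⁻¹ * q ^ m := h4
  have hgeo : Summable (fun m : ℕ => (sigma * L)⁻¹ * q ^ m) :=
    (summable_geometric_of_lt_one hq0.le hq1).mul_left _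
  have hsum : Summable (fun m : ℕ => Real.exp (-1 / delta ^ (sigma * q ^ (1 - ((m : ℝ) + 1))))) :=
    Summable.of_nonneg_of_le (fun m => (Real.exp_pos _).le) hbound hgeo
  refine ⟨hsum, ?_⟩
  have htsum : ∑' m : ℕ, Real.exp (-1 / delta ^ (sigma * q ^ (1 - ((m : ℝ) + 1))))
      ≤ ∑' m : ℕ, (sigma * L)⁻¹ * q ^ m := Summable.tsum_le_tsum hbound hsum hgeo
  have : ∑' m : ℕ, (sigma * L)⁻¹ * q ^ m = (sigma * L)⁻¹ * (1 - q)⁻¹ := by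
    rw [tsum_mul_left, tsum_geometric_of_lt_one hq0.le hq1]
  rw [this] at htsum
  have hlt : (sigma * L)⁻¹ * (1 - q)⁻¹ < 1 := by
    rw [← mul_inv]
    rw [inv_lt_one_iff₀]
    right
    have : 1 < sigma * (1 - q) * L := by
      rw [div_lt_iff₀ (by positivity)] at hL1
      linarith [hL1]
    nlinarith [this]
  linarith
end

section
/- Let f be analytic in the unit disc 𝔻 and k ∈ ℕ. Then λ_M(f^{(k)}) = λ_M(f) and σ_M(f^{(k)}) = σ_M(f), where λ_M(g) = liminf_{r→1⁻} log⁺log⁺M(r,g)/log(1/(1-r)) and σ_M(g) = limsup_{r→1⁻} log⁺log⁺M(r,g)/log(1/(1-r)). -/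
open Filter Set

namespace OrderAux

open Metric

/-! ### `logPlus` arithmetic -/

lemma lp_nonneg (x : ℝ) : 0 ≤ logPlus x := le_max_right _ _

lemma lp_mono {x y : ℝ} (hx : 0 ≤ x) (h : x ≤ y) : logPlus x ≤ logPlus y := by
  rcases eq_or_lt_of_le hx with h0 | h0
  · have : Real.log x = 0 := by rw [← h0, Real.log_zero]
    simp [logPlus, this, lp_nonneg y]
  · exact max_le (le_max_of_le_left (Real.log_le_log h0 h)) (le_max_right _ _)

lemma lp_mul {a b : ℝ} (ha : 1 ≤ a) (hb : 0 ≤ b) :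
    logPlus (a * b) ≤ Real.log a + logPlus b := by
  have hla : 0 ≤ Real.log a := Real.log_nonneg ha
  apply max_le
  · rcases eq_or_lt_of_le hb with h0 | h0
    · rw [← h0, mul_zero, Real.log_zero]
      exact add_nonneg hla (lp_nonneg _)
    · rw [Real.log_mul (by linarith) (ne_of_gt h0)]
      exact add_le_add le_rfl (le_max_left _ _)
  · exact add_nonneg hla (lp_nonneg b)

lemma lp_add {a b : ℝ} (ha : 0 ≤ a) (hb : 0 ≤ b) :
    logPlus (a + b) ≤ logPlus a + logPlus b + Real.log 2 := by
  have h1 : a + b ≤ 2 * max a b := by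
    rcases le_total a b with h | h
    · rw [max_eq_right h]; linarith
    · rw [max_eq_left h]; linarith
  have h2 : logPlus (a + b) ≤ logPlus (2 * max a b) :=
    lp_mono (add_nonneg ha hb) h1
  have h3 : logPlus (2 * max a b) ≤ Real.log 2 + logPlus (max a b) :=
    lp_mul one_le_two (le_max_of_le_left ha)
  have h4 : logPlus (max a b) ≤ logPlus a + logPlus b := by
    rcases le_total a b with h | h
    · rw [max_eq_right h]; linarith [lp_nonneg a]
    · rw [max_eq_left h]; linarith [lp_nonneg b]
  linarith

/-! ### `maxMod` basics -/

lemma contOn_sphere {g : ℂ → ℂ} (hg : DifferentiableOn ℂ g (ball (0:ℂ) 1))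
    {r : ℝ} (hr1 : r < 1) : ContinuousOn g (sphere (0:ℂ) r) := by
  refine hg.continuousOn.mono fun z hz => ?_
  have : dist z 0 = r := hz
  rw [mem_ball, this]; exact hr1

lemma abs_le_maxMod {g : ℂ → ℂ} {r : ℝ} (hg : ContinuousOn g (sphere (0:ℂ) r))
    {z : ℂ} (hz : z ∈ sphere (0:ℂ) r) : ‖g z‖ ≤ maxMod g r := by
  refine le_csSup ?_ ⟨z, hz, rfl⟩
  exact (isCompact_sphere (0:ℂ) r).bddAbove_image
    (continuous_norm.comp_continuousOn hg)

lemma maxMod_nonneg {g : ℂ → ℂ} {r : ℝ} (hg : ContinuousOn g (sphere (0:ℂ) r))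
    (hr : 0 ≤ r) : 0 ≤ maxMod g r := by
  obtain ⟨z, hz⟩ := (NormedSpace.sphere_nonempty (x := (0:ℂ)) (r := r)).mpr hr
  exact le_trans (norm_nonneg _) (abs_le_maxMod hg hz)

lemma maxMod_le {g : ℂ → ℂ} {r C : ℝ} (hr : 0 ≤ r)
    (h : ∀ z ∈ sphere (0:ℂ) r, ‖g z‖ ≤ C) : maxMod g r ≤ C := by
  refine csSup_le ((((NormedSpace.sphere_nonempty (x := (0:ℂ)) (r := r)).mpr hr)).image _) ?_
  rintro _ ⟨z, hz, rfl⟩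
  exact h z hz

/-- Maximum modulus principle on a closed ball inside the unit disc. -/
lemma abs_le_maxMod_closed {g : ℂ → ℂ} (hg : DifferentiableOn ℂ g (ball (0:ℂ) 1))
    {R : ℝ} (hR0 : 0 < R) (hR1 : R < 1) {z : ℂ} (hz : ‖z‖ ≤ R) :
    ‖g z‖ ≤ maxMod g R := by
  have hsub : closedBall (0:ℂ) R ⊆ ball (0:ℂ) 1 := closedBall_subset_ball hR1
  have hcl : closure (ball (0:ℂ) R) = closedBall (0:ℂ) R := closure_ball (0:ℂ) hR0.ne'
  have hd : DiffContOnCl ℂ g (ball (0:ℂ) R) :=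
    DifferentiableOn.diffContOnCl (by rw [hcl]; exact hg.mono hsub)
  have hfr : ∀ w ∈ frontier (ball (0:ℂ) R), ‖g w‖ ≤ maxMod g R := by
    intro w hw
    rw [frontier_ball (0:ℂ) hR0.ne'] at hw
    exact abs_le_maxMod (contOn_sphere hg hR1) hw
  have hzcl : z ∈ closure (ball (0:ℂ) R) := by
    rw [hcl]
    rw [mem_closedBall_zero_iff]; exact hz
  have := Complex.norm_le_of_forall_mem_frontier_norm_le isBounded_ball hd hfr hzcl
  exact this

/-! ### Cauchy estimate -/

lemma maxMod_iteratedDeriv_le {g : ℂ → ℂ} (hg : DifferentiableOn ℂ g (ball (0:ℂ) 1))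
    (k : ℕ) {r : ℝ} (hr0 : 0 < r) (hr1 : r < 1) :
    maxMod (iteratedDeriv k g) r ≤ (k.factorial : ℝ) * (2 / (1 - r)) ^ k * maxMod g ((1 + r) / 2) := by
  set s : ℝ := (1 + r) / 2 with hs
  have hs0 : 0 < s := by rw [hs]; linarith
  have hs1 : s < 1 := by rw [hs]; linarith
  have hM0 : 0 ≤ maxMod g s := maxMod_nonneg (contOn_sphere hg hs1) hs0.le
  refine maxMod_le hr0.le fun z hz => ?_
  have hzr : ‖z‖ = r := by
    have : dist z 0 = r := hz
    rwa [Complex.dist_eq, sub_zero] at this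
  set ρ : ℝ := (1 - r) / 2 with hρ
  have hρ0 : 0 < ρ := by rw [hρ]; linarith
  set ρ' : NNReal := ⟨ρ, hρ0.le⟩ with hρ'
  have hball : closedBall z ρ ⊆ ball (0:ℂ) 1 := by
    intro w hw
    rw [mem_closedBall] at hw
    rw [mem_ball_zero_iff]
    calc ‖w‖ = ‖(w - z) + z‖ := by ring_nf
      _ ≤ ‖w - z‖ + ‖z‖ := norm_add_le _ _
      _ ≤ ρ + r := by
          refine add_le_add ?_ ?_
          · rw [← dist_eq_norm]; exact hw
          · rw [hzr]
      _ < 1 := by rw [hρ]; linarith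
  have hps : HasFPowerSeriesOnBall g (cauchyPowerSeries g z ρ') z ρ' := by
    refine DifferentiableOn.hasFPowerSeriesOnBall ?_ hρ0
    exact hg.mono hball
  have key := hps.factorial_smul (1 : ℂ) k
  -- key : k ! • cauchyPowerSeries g z ρ' k (fun _ => 1) = iteratedFDeriv ℂ k g z (fun _ => 1)
  have hnorm : ‖iteratedDeriv k g z‖ ≤ (k.factorial : ℝ) * ‖cauchyPowerSeries g z ρ' k‖ := by
    rw [iteratedDeriv_eq_iteratedFDeriv, ← key]
    have h1 : ‖(k.factorial : ℕ) • (cauchyPowerSeries g z ρ' k fun _ => (1:ℂ))‖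
        = (k.factorial : ℝ) * ‖cauchyPowerSeries g z ρ' k fun _ => (1:ℂ)‖ := by
      rw [nsmul_eq_mul, norm_mul]
      simp
    rw [h1]
    refine mul_le_mul_of_nonneg_left ?_ (by positivity)
    have h2 := (cauchyPowerSeries g z ρ' k).le_opNorm fun _ => (1:ℂ)
    simpa using h2
  have hcct : Continuous fun θ : ℝ => ‖g (circleMap z ρ θ)‖ := by
    refine (hg.continuousOn.comp_continuous (continuous_circleMap z ρ) fun θ => ?_).norm
    exact hball (sphere_subset_closedBall (circleMap_mem_sphere z hρ0.le θ))
  have hbd : ∀ θ : ℝ, ‖g (circleMap z ρ θ)‖ ≤ maxMod g s := by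
    intro θ
    refine abs_le_maxMod_closed hg hs0 hs1 ?_
    have hmem := circleMap_mem_sphere z hρ0.le θ
    have hdist : dist (circleMap z ρ θ) z = ρ := hmem
    calc ‖circleMap z ρ θ‖ = ‖(circleMap z ρ θ - z) + z‖ := by
          rw [sub_add_cancel]
      _ ≤ ‖circleMap z ρ θ - z‖ + ‖z‖ := norm_add_le _ _
      _ = ρ + r := by rw [← dist_eq_norm, hdist, hzr]
      _ = s := by rw [hρ, hs]; ring
  have hint : (∫ θ : ℝ in (0:ℝ)..2 * Real.pi, ‖g (circleMap z ρ θ)‖)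
      ≤ 2 * Real.pi * maxMod g s := by
    have h := intervalIntegral.integral_mono_on (a := (0:ℝ)) (b := 2 * Real.pi)
      Real.two_pi_pos.le (hcct.intervalIntegrable (μ := MeasureTheory.volume) _ _) intervalIntegrable_const
      (fun θ _ => hbd θ)
    simpa using h
  have hps_norm := norm_cauchyPowerSeries_le g z (ρ' : ℝ) k
  have hcoef : ‖cauchyPowerSeries g z ρ' k‖ ≤ maxMod g s * (ρ⁻¹) ^ k := by
    refine hps_norm.trans ?_
    have hρabs : |(ρ' : ℝ)| = ρ := abs_of_pos hρ0
    rw [hρabs]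
    refine mul_le_mul_of_nonneg_right ?_ (by positivity)
    calc (2 * Real.pi)⁻¹ * ∫ θ : ℝ in (0:ℝ)..2 * Real.pi, ‖g (circleMap z ρ θ)‖
        ≤ (2 * Real.pi)⁻¹ * (2 * Real.pi * maxMod g s) := by
          refine mul_le_mul_of_nonneg_left hint (by positivity)
      _ = maxMod g s := by field_simp
  have hρinv : ρ⁻¹ = 2 / (1 - r) := by rw [hρ, inv_div]
  calc ‖iteratedDeriv k g z‖ = ‖iteratedDeriv k g z‖ :=
        rfl
    _ ≤ (k.factorial : ℝ) * ‖cauchyPowerSeries g z ρ' k‖ := hnorm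
    _ ≤ (k.factorial : ℝ) * (maxMod g s * (ρ⁻¹) ^ k) := by
        refine mul_le_mul_of_nonneg_left hcoef (by positivity)
    _ = (k.factorial : ℝ) * (2 / (1 - r)) ^ k * maxMod g s := by rw [hρinv]; ring

/-! ### Reverse estimate -/

lemma diffOn_iter {f : ℂ → ℂ} (hf : DifferentiableOn ℂ f (ball (0:ℂ) 1)) (n : ℕ) :
    DifferentiableOn ℂ (iteratedDeriv n f) (ball (0:ℂ) 1) := by
  rw [iteratedDeriv_eq_iterate]
  exact ((hf.analyticOnNhd isOpen_ball).iterated_deriv n).differentiableOn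

lemma maxMod_le_deriv {g : ℂ → ℂ} (hg : DifferentiableOn ℂ g (ball (0:ℂ) 1))
    {r : ℝ} (hr0 : 0 < r) (hr1 : r < 1) :
    maxMod g r ≤ maxMod (deriv g) r + ‖g 0‖ := by
  have hd' : DifferentiableOn ℂ (deriv g) (ball (0:ℂ) 1) :=
    ((hg.analyticOnNhd isOpen_ball).deriv_of_isOpen isOpen_ball).differentiableOn
  set C := maxMod (deriv g) r with hC
  have hC0 : 0 ≤ C := maxMod_nonneg (contOn_sphere hd' hr1) hr0.le
  refine maxMod_le hr0.le fun z hz => ?_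
  have hzr : ‖z‖ = r := by
    have : dist z 0 = r := hz
    rwa [Complex.dist_eq, sub_zero] at this
  have h1 : ∀ x ∈ closedBall (0:ℂ) r, DifferentiableAt ℂ g x := fun x hx =>
    hg.differentiableAt (isOpen_ball.mem_nhds (closedBall_subset_ball hr1 hx))
  have h2 : ∀ x ∈ closedBall (0:ℂ) r, ‖deriv g x‖ ≤ C := by
    intro x hx
    refine abs_le_maxMod_closed hd' hr0 hr1 ?_
    rw [← mem_closedBall_zero_iff]; exact hx
  have h3 := (convex_closedBall (0:ℂ) r).norm_image_sub_le_of_norm_deriv_le h1 h2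
    (mem_closedBall_self hr0.le) (sphere_subset_closedBall hz)
  -- h3 : ‖g z - g 0‖ ≤ C * ‖z - 0‖
  have h4 : ‖g z - g 0‖ ≤ C * r := by
    refine h3.trans ?_
    rw [sub_zero, hzr]
  calc ‖g z‖ = ‖(g z - g 0) + g 0‖ := by rw [sub_add_cancel]
    _ ≤ ‖g z - g 0‖ + ‖g 0‖ := norm_add_le _ _
    _ ≤ C * r + ‖g 0‖ := by
        exact add_le_add h4 le_rfl
    _ ≤ C + ‖g 0‖ := by nlinarith

lemma maxMod_le_iteratedDeriv {f : ℂ → ℂ} (hf : DifferentiableOn ℂ f (ball (0:ℂ) 1))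
    (k : ℕ) {r : ℝ} (hr0 : 0 < r) (hr1 : r < 1) :
    maxMod f r ≤ maxMod (iteratedDeriv k f) r
      + ∑ j ∈ Finset.range k, ‖iteratedDeriv j f 0‖ := by
  induction k with
  | zero => simp [iteratedDeriv_zero]
  | succ n ih =>
      have hdn : DifferentiableOn ℂ (iteratedDeriv n f) (ball (0:ℂ) 1) := diffOn_iter hf n
      have hstep := maxMod_le_deriv hdn hr0 hr1
      rw [← iteratedDeriv_succ] at hstep
      rw [Finset.sum_range_succ]
      calc maxMod f r ≤ maxMod (iteratedDeriv n f) r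
            + ∑ j ∈ Finset.range n, ‖iteratedDeriv j f 0‖ := ih
        _ ≤ (maxMod (iteratedDeriv (n+1) f) r + ‖iteratedDeriv n f 0‖)
            + ∑ j ∈ Finset.range n, ‖iteratedDeriv j f 0‖ :=
            add_le_add_left hstep _
        _ = maxMod (iteratedDeriv (n+1) f) r
            + (∑ j ∈ Finset.range n, ‖iteratedDeriv j f 0‖
              + ‖iteratedDeriv n f 0‖) := by ring

/-! ### Filter facts -/

noncomputable def LL : ℝ → ℝ := fun r => Real.log (1 / (1 - r))

lemma ev_Ioo : ∀ᶠ r in nhdsWithin (1:ℝ) (Set.Iio 1), r ∈ Set.Ioo (0:ℝ) 1 := by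
  have h1 : ∀ᶠ r in nhdsWithin (1:ℝ) (Set.Iio 1), r < 1 := eventually_mem_nhdsWithin
  have h2 : ∀ᶠ r in nhdsWithin (1:ℝ) (Set.Iio 1), 0 < r := by
    have : ∀ᶠ r in nhds (1:ℝ), 0 < r := (isOpen_Ioi.eventually_mem (by norm_num : (1:ℝ) ∈ Ioi 0))
    exact this.filter_mono nhdsWithin_le_nhds
  filter_upwards [h1, h2] with r hr1 hr2
  exact ⟨hr2, hr1⟩

lemma tendsto_L : Tendsto LL (nhdsWithin (1:ℝ) (Set.Iio 1)) atTop := by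
  have h1 : Tendsto (fun r : ℝ => 1 - r) (nhdsWithin (1:ℝ) (Set.Iio 1))
      (nhdsWithin (0:ℝ) (Set.Ioi 0)) := by
    apply tendsto_nhdsWithin_of_tendsto_nhds_of_eventually_within
    · have h : Tendsto (fun r : ℝ => 1 - r) (nhds 1) (nhds 0) := by
        have hc : Continuous (fun r : ℝ => 1 - r) := by continuity
        simpa using hc.tendsto 1
      exact h.mono_left nhdsWithin_le_nhds
    · exact eventually_mem_nhdsWithin.mono fun r hr => Set.mem_Ioi.mpr (sub_pos.mpr (Set.mem_Iio.mp hr))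
  have h2 := tendsto_inv_nhdsGT_zero.comp h1
  have h3 := Real.tendsto_log_atTop.comp h2
  refine h3.congr fun r => ?_
  simp [LL, Function.comp, one_div]

lemma tendsto_m : Tendsto (fun r : ℝ => (1 + r) / 2)
    (nhdsWithin (1:ℝ) (Set.Iio 1)) (nhdsWithin (1:ℝ) (Set.Iio 1)) := by
  apply tendsto_nhdsWithin_of_tendsto_nhds_of_eventually_within
  · have h : Tendsto (fun r : ℝ => (1 + r) / 2) (nhds 1) (nhds 1) := by
      have hc : Continuous (fun r : ℝ => (1 + r) / 2) := by continuity
      have := hc.tendsto 1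
      norm_num at this
      exact this
    exact h.mono_left nhdsWithin_le_nhds
  · exact eventually_mem_nhdsWithin.mono fun r hr => by
      simp only [mem_Iio] at hr ⊢; linarith

lemma tendsto_m' : Tendsto (fun σ : ℝ => 2 * σ - 1)
    (nhdsWithin (1:ℝ) (Set.Iio 1)) (nhdsWithin (1:ℝ) (Set.Iio 1)) := by
  apply tendsto_nhdsWithin_of_tendsto_nhds_of_eventually_within
  · have h : Tendsto (fun σ : ℝ => 2 * σ - 1) (nhds 1) (nhds 1) := by
      have hc : Continuous (fun σ : ℝ => 2 * σ - 1) := by continuity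
      have := hc.tendsto 1
      norm_num at this
      exact this
    exact h.mono_left nhdsWithin_le_nhds
  · exact eventually_mem_nhdsWithin.mono fun σ hσ => by
      simp only [mem_Iio] at hσ ⊢; linarith

lemma EReal_le_coe {X : EReal} {c : ℝ}
    (h : ∀ ε : ℝ, 0 < ε → X ≤ ((c + ε : ℝ) : EReal)) : X ≤ (c : EReal) := by
  by_contra hc
  push_neg at hc
  obtain ⟨d, hd1, hd2⟩ := EReal.exists_between_coe_real hc
  have hd : c < d := by exact_mod_cast hd1
  have h2 := h (d - c) (by linarith)
  rw [show c + (d - c) = d by ring] at h2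
  exact absurd (h2.trans_lt hd2) (lt_irrefl X)

/-- Master comparison lemma. -/
lemma master {u v E : ℝ → ℝ} {m m' : ℝ → ℝ}
    (hm : Tendsto m (nhdsWithin (1:ℝ) (Set.Iio 1)) (nhdsWithin (1:ℝ) (Set.Iio 1)))
    (hm' : Tendsto m' (nhdsWithin (1:ℝ) (Set.Iio 1)) (nhdsWithin (1:ℝ) (Set.Iio 1)))
    (hmm' : ∀ σ, m (m' σ) = σ)
    (hLm : ∀ᶠ r in nhdsWithin (1:ℝ) (Set.Iio 1), LL (m r) ≤ LL r + Real.log 2)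
    (hu : ∀ r, 0 ≤ u r) (hv : ∀ r, 0 ≤ v r)
    (hE : Tendsto (fun r => E r / LL r) (nhdsWithin (1:ℝ) (Set.Iio 1)) (nhds 0))
    (hle : ∀ᶠ r in nhdsWithin (1:ℝ) (Set.Iio 1), u r ≤ v (m r) + E r) :
    Filter.liminf (fun r => ((u r / LL r : ℝ) : EReal)) (nhdsWithin (1:ℝ) (Set.Iio 1)) ≤
      Filter.liminf (fun r => ((v r / LL r : ℝ) : EReal)) (nhdsWithin (1:ℝ) (Set.Iio 1)) ∧
    Filter.limsup (fun r => ((u r / LL r : ℝ) : EReal)) (nhdsWithin (1:ℝ) (Set.Iio 1)) ≤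
      Filter.limsup (fun r => ((v r / LL r : ℝ) : EReal)) (nhdsWithin (1:ℝ) (Set.Iio 1)) := by
  set lf := nhdsWithin (1:ℝ) (Set.Iio 1) with hlf
  set U : ℝ → EReal := fun r => ((u r / LL r : ℝ) : EReal) with hU
  set V : ℝ → EReal := fun r => ((v r / LL r : ℝ) : EReal) with hV
  have hLpos : ∀ᶠ r in lf, 0 < LL r := tendsto_L.eventually_gt_atTop 0
  have hVnonneg : ∀ᶠ r in lf, (0 : EReal) ≤ V r := by
    filter_upwards [hLpos] with r hr
    have h : (0:ℝ) ≤ v r / LL r := div_nonneg (hv r) hr.le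
    show ((0:ℝ) : EReal) ≤ ((v r / LL r : ℝ) : EReal)
    exact_mod_cast h
  have hV0 : (0 : EReal) ≤ Filter.liminf V lf := Filter.le_liminf_of_le (by isBoundedDefault)
    hVnonneg
  have hV0' : (0 : EReal) ≤ Filter.limsup V lf := hV0.trans Filter.liminf_le_limsup
  -- the error term
  have herr : ∀ c : ℝ, Tendsto (fun r => (c * Real.log 2 + E r) / LL r) lf (nhds 0) := by
    intro c
    have h1 : Tendsto (fun r => c * Real.log 2 / LL r + E r / LL r) lf (nhds 0) := by
      have h2 := (tendsto_const_nhds (x := c * Real.log 2)).div_atTop tendsto_L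
      simpa using h2.add hE
    exact h1.congr fun r => (add_div _ _ _).symm
  -- pointwise core
  have main : ∀ c ε r, 0 < c → (0 < LL r ∧ u r ≤ v (m r) + E r ∧ LL (m r) ≤ LL r + Real.log 2
        ∧ (c * Real.log 2 + E r) / LL r < ε) →
      0 < LL (m r) → v (m r) / LL (m r) < c → u r / LL r ≤ c + ε := by
    rintro c ε r hc ⟨hL, hule, hLmr, herrr⟩ hLmpos hvc
    have h1 : v (m r) ≤ c * LL (m r) := ((div_lt_iff₀ hLmpos).mp hvc).le
    have h2 : u r ≤ c * LL r + (c * Real.log 2 + E r) := by nlinarith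
    calc u r / LL r ≤ (c * LL r + (c * Real.log 2 + E r)) / LL r :=
          (div_le_div_iff_of_pos_right hL).mpr h2
      _ = c + (c * Real.log 2 + E r) / LL r := by
          rw [add_div, mul_div_assoc, div_self hL.ne', mul_one]
      _ ≤ c + ε := by linarith
  have hpack : ∀ c ε : ℝ, 0 < ε → ∀ᶠ r in lf,
      (0 < LL r ∧ u r ≤ v (m r) + E r ∧ LL (m r) ≤ LL r + Real.log 2
        ∧ (c * Real.log 2 + E r) / LL r < ε) := by
    intro c ε hε
    have h4 : ∀ᶠ r in lf, (c * Real.log 2 + E r) / LL r < ε :=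
      (herr c).eventually_lt_const hε
    filter_upwards [hLpos, hle, hLm, h4] with r p1 p2 p3 p4
    exact ⟨p1, p2, p3, p4⟩
  -- key eventual version
  have key : ∀ c ε : ℝ, 0 < c → 0 < ε → (∀ᶠ σ in lf, v σ / LL σ < c) →
      ∀ᶠ r in lf, u r / LL r ≤ c + ε := by
    intro c ε hc hε hev
    filter_upwards [hpack c ε hε, hm.eventually hLpos, hm.eventually hev] with r p1 p2 p3
    exact main c ε r hc p1 p2 p3
  -- key frequent version
  have keyF : ∀ c ε : ℝ, 0 < c → 0 < ε → (∃ᶠ σ in lf, v σ / LL σ < c) →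
      ∃ᶠ r in lf, u r / LL r ≤ c + ε := by
    intro c ε hc hε hfr
    have hfr2 : ∃ᶠ σ in lf, (v σ / LL σ < c ∧ 0 < LL σ) := hfr.and_eventually hLpos
    have hfr3 : ∃ᶠ σ in lf, ((v σ / LL σ < c ∧ 0 < LL σ)
        ∧ (0 < LL (m' σ) ∧ u (m' σ) ≤ v (m (m' σ)) + E (m' σ)
          ∧ LL (m (m' σ)) ≤ LL (m' σ) + Real.log 2
          ∧ (c * Real.log 2 + E (m' σ)) / LL (m' σ) < ε)) :=
      hfr2.and_eventually (hm'.eventually (hpack c ε hε))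
    have hfr4 : ∃ᶠ σ in lf, u (m' σ) / LL (m' σ) ≤ c + ε := by
      refine hfr3.mono ?_
      rintro σ ⟨⟨hvc, hLσ⟩, hp⟩
      refine main c ε (m' σ) hc hp ?_ ?_
      · rw [hmm' σ]; exact hLσ
      · rw [hmm' σ]; exact hvc
    have hmap : ∃ᶠ r in Filter.map m' lf, u r / LL r ≤ c + ε := by
      rwa [Filter.frequently_map]
    exact hmap.filter_mono hm'
  constructor
  · -- liminf
    by_contra hlt
    push_neg at hlt
    obtain ⟨c, hc1, hc2⟩ := EReal.exists_between_coe_real hlt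
    have hcpos : (0:ℝ) < c := by
      have h0 : ((0:ℝ) : EReal) < (c : EReal) := lt_of_le_of_lt (by exact_mod_cast hV0) hc1
      exact EReal.coe_lt_coe_iff.mp h0
    have hfr : ∃ᶠ σ in lf, v σ / LL σ < c := by
      have h := Filter.frequently_lt_of_liminf_lt (by isBoundedDefault) hc1
      refine h.mono fun σ hσ => ?_
      exact EReal.coe_lt_coe_iff.mp hσ
    have hle2 : Filter.liminf U lf ≤ (c : EReal) := by
      refine EReal_le_coe fun ε hε => ?_
      have hfr2 := keyF c ε hcpos hε hfr
      refine Filter.liminf_le_of_frequently_le ?_ (by isBoundedDefault)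
      refine hfr2.mono fun r hr => ?_
      exact EReal.coe_le_coe_iff.mpr hr
    exact absurd (hle2.trans_lt hc2) (lt_irrefl _)
  · -- limsup
    by_contra hlt
    push_neg at hlt
    obtain ⟨c, hc1, hc2⟩ := EReal.exists_between_coe_real hlt
    have hcpos : (0:ℝ) < c := by
      have h0 : ((0:ℝ) : EReal) < (c : EReal) := lt_of_le_of_lt (by exact_mod_cast hV0') hc1
      exact EReal.coe_lt_coe_iff.mp h0
    have hev : ∀ᶠ σ in lf, v σ / LL σ < c := by
      have h := Filter.eventually_lt_of_limsup_lt hc1 (by isBoundedDefault)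
      refine h.mono fun σ hσ => ?_
      exact EReal.coe_lt_coe_iff.mp hσ
    have hle2 : Filter.limsup U lf ≤ (c : EReal) := by
      refine EReal_le_coe fun ε hε => ?_
      have hev2 := key c ε hcpos hε hev
      refine Filter.limsup_le_of_le (by isBoundedDefault) ?_
      refine hev2.mono fun r hr => ?_
      exact EReal.coe_le_coe_iff.mpr hr
    exact absurd (hle2.trans_lt hc2) (lt_irrefl _)

/-! ### The asymptotic limit lemma -/

lemma tendsto_lp_aux (c d : ℝ) (k : ℕ) :
    Tendsto (fun t : ℝ => (logPlus (c + (k:ℝ) * t) + d) / t) atTop (nhds 0) := by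
  rcases Nat.eq_zero_or_pos k with rfl | hk
  · simp only [Nat.cast_zero, zero_mul, add_zero]
    exact tendsto_const_nhds.div_atTop tendsto_id
  · have hk1 : (1:ℝ) ≤ (k:ℝ) := by exact_mod_cast hk
    have hlog : Tendsto (fun t : ℝ => Real.log t / t) atTop (nhds 0) := by
      have := Real.isLittleO_log_id_atTop.tendsto_div_nhds_zero
      simpa using this
    have hd : Tendsto (fun t : ℝ => d / t) atTop (nhds 0) :=
      tendsto_const_nhds.div_atTop tendsto_id
    have h0 : Tendsto (fun t : ℝ => (2 * Real.log t + d) / t) atTop (nhds 0) := by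
      have h1 : Tendsto (fun t : ℝ => 2 * (Real.log t / t) + d / t) atTop (nhds 0) := by
        simpa using (hlog.const_mul 2).add hd
      exact h1.congr fun t => by ring
    refine tendsto_of_tendsto_of_tendsto_of_le_of_le' hd h0 ?_ ?_
    · filter_upwards [eventually_ge_atTop (1:ℝ)] with t ht
      have ht0 : (0:ℝ) < t := by linarith
      exact (div_le_div_iff_of_pos_right ht0).mpr (by linarith [lp_nonneg (c + (k:ℝ) * t)])
    · filter_upwards [eventually_ge_atTop (max 1 (|c| + (k:ℝ) + 1))] with t ht
      have ht1 : (1:ℝ) ≤ t := le_trans (le_max_left _ _) ht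
      have htc : |c| + (k:ℝ) + 1 ≤ t := le_trans (le_max_right _ _) ht
      have ht0 : (0:ℝ) < t := by linarith
      have hca : c ≤ |c| := le_abs_self c
      have hca' : -|c| ≤ c := neg_abs_le c
      have harg0 : 0 ≤ c + (k:ℝ) * t := by nlinarith
      have harg : c + (k:ℝ) * t ≤ t * t := by nlinarith
      have htt1 : (1:ℝ) ≤ t * t := by nlinarith
      have hlp : logPlus (t * t) = 2 * Real.log t := by
        rw [logPlus, max_eq_left (Real.log_nonneg htt1), Real.log_mul ht0.ne' ht0.ne']
        ring
      refine (div_le_div_iff_of_pos_right ht0).mpr ?_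
      have := lp_mono harg0 harg
      rw [hlp] at this
      linarith

/-! ### Pointwise `ψ` inequalities -/

lemma psi_deriv_le {f : ℂ → ℂ} (hf : DifferentiableOn ℂ f (ball (0:ℂ) 1)) (k : ℕ)
    {r : ℝ} (hr : r ∈ Set.Ioo (0:ℝ) 1) :
    logPlus (logPlus (maxMod (iteratedDeriv k f) r)) ≤
      logPlus (logPlus (maxMod f ((1 + r) / 2)))
      + (logPlus (Real.log (k.factorial) + (k:ℝ) * Real.log (2 / (1 - r))) + Real.log 2) := by
  obtain ⟨hr0, hr1⟩ := hr
  set s : ℝ := (1 + r) / 2 with hs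
  have hs0 : (0:ℝ) < s := by rw [hs]; linarith
  have hs1 : s < 1 := by rw [hs]; linarith
  have hb : (1:ℝ) ≤ 2 / (1 - r) := by
    rw [le_div_iff₀ (by linarith)]; linarith
  have hfac : (1:ℝ) ≤ (k.factorial : ℝ) := by exact_mod_cast Nat.one_le_iff_ne_zero.mpr k.factorial_ne_zero
  have hP1 : (1:ℝ) ≤ (k.factorial : ℝ) * (2 / (1 - r)) ^ k := by
    have := one_le_pow₀ hb (n := k)
    nlinarith
  have hlogP : Real.log ((k.factorial : ℝ) * (2 / (1 - r)) ^ k)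
      = Real.log (k.factorial) + (k:ℝ) * Real.log (2 / (1 - r)) := by
    rw [Real.log_mul (by positivity) (by positivity), Real.log_pow]
  have hMk : maxMod (iteratedDeriv k f) r ≤ (k.factorial : ℝ) * (2 / (1 - r)) ^ k * maxMod f s :=
    maxMod_iteratedDeriv_le hf k hr0 hr1
  have h0 : 0 ≤ maxMod (iteratedDeriv k f) r :=
    maxMod_nonneg (contOn_sphere (diffOn_iter hf k) hr1) hr0.le
  have hM0 : 0 ≤ maxMod f s := maxMod_nonneg (contOn_sphere hf hs1) hs0.le
  have step1 : logPlus (maxMod (iteratedDeriv k f) r)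
      ≤ Real.log ((k.factorial : ℝ) * (2 / (1 - r)) ^ k) + logPlus (maxMod f s) := by
    calc logPlus (maxMod (iteratedDeriv k f) r)
        ≤ logPlus ((k.factorial : ℝ) * (2 / (1 - r)) ^ k * maxMod f s) := lp_mono h0 hMk
      _ ≤ Real.log ((k.factorial : ℝ) * (2 / (1 - r)) ^ k) + logPlus (maxMod f s) := lp_mul hP1 hM0
  calc logPlus (logPlus (maxMod (iteratedDeriv k f) r))
      ≤ logPlus (Real.log ((k.factorial : ℝ) * (2 / (1 - r)) ^ k) + logPlus (maxMod f s)) :=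
        lp_mono (lp_nonneg _) step1
    _ ≤ logPlus (Real.log ((k.factorial : ℝ) * (2 / (1 - r)) ^ k)) + logPlus (logPlus (maxMod f s))
        + Real.log 2 := lp_add (Real.log_nonneg hP1) (lp_nonneg _)
    _ = logPlus (logPlus (maxMod f s))
        + (logPlus (Real.log (k.factorial) + (k:ℝ) * Real.log (2 / (1 - r))) + Real.log 2) := by
        rw [hlogP]; ring

lemma psi_fun_le {f : ℂ → ℂ} (hf : DifferentiableOn ℂ f (ball (0:ℂ) 1)) (k : ℕ)
    {r : ℝ} (hr : r ∈ Set.Ioo (0:ℝ) 1) :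
    logPlus (logPlus (maxMod f r)) ≤
      logPlus (logPlus (maxMod (iteratedDeriv k f) r))
      + (logPlus (logPlus (∑ j ∈ Finset.range k, ‖iteratedDeriv j f 0‖)
          + Real.log 2) + Real.log 2) := by
  obtain ⟨hr0, hr1⟩ := hr
  set C : ℝ := ∑ j ∈ Finset.range k, ‖iteratedDeriv j f 0‖ with hCdef
  have hC0 : 0 ≤ C := Finset.sum_nonneg fun j _ => norm_nonneg _
  have hlog2 : (0:ℝ) ≤ Real.log 2 := Real.log_nonneg one_le_two
  have h := maxMod_le_iteratedDeriv hf k hr0 hr1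
  have h0f : 0 ≤ maxMod f r := maxMod_nonneg (contOn_sphere hf hr1) hr0.le
  have h0k : 0 ≤ maxMod (iteratedDeriv k f) r :=
    maxMod_nonneg (contOn_sphere (diffOn_iter hf k) hr1) hr0.le
  have step1 : logPlus (maxMod f r)
      ≤ logPlus (maxMod (iteratedDeriv k f) r) + (logPlus C + Real.log 2) := by
    calc logPlus (maxMod f r) ≤ logPlus (maxMod (iteratedDeriv k f) r + C) := lp_mono h0f h
      _ ≤ logPlus (maxMod (iteratedDeriv k f) r) + logPlus C + Real.log 2 := lp_add h0k hC0
      _ = _ := by ring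
  calc logPlus (logPlus (maxMod f r))
      ≤ logPlus (logPlus (maxMod (iteratedDeriv k f) r) + (logPlus C + Real.log 2)) :=
        lp_mono (lp_nonneg _) step1
    _ ≤ logPlus (logPlus (maxMod (iteratedDeriv k f) r)) + logPlus (logPlus C + Real.log 2)
        + Real.log 2 := lp_add (lp_nonneg _) (add_nonneg (lp_nonneg _) hlog2)
    _ = _ := by ring

lemma log_two_div {r : ℝ} (hr : r ∈ Set.Ioo (0:ℝ) 1) :
    Real.log (2 / (1 - r)) = Real.log 2 + LL r := by
  obtain ⟨hr0, hr1⟩ := hr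
  have h1 : (2:ℝ) / (1 - r) = 2 * (1 / (1 - r)) := by ring
  rw [h1, Real.log_mul two_ne_zero (one_div_ne_zero (sub_ne_zero.mpr hr1.ne'))]
  rfl

end OrderAux

open OrderAux Metric in
/-- For `f` analytic in the unit disc and `k ∈ ℕ`, the derivative `f⁽ᵏ⁾` has the
same lower order and the same order of growth as `f`. -/
theorem order_iteratedDeriv (f : ℂ → ℂ) (k : ℕ)
    (hf : DifferentiableOn ℂ f (Metric.ball (0:ℂ) 1)) :
    lowerOrder (iteratedDeriv k f) = lowerOrder f ∧
    upperOrder (iteratedDeriv k f) = upperOrder f := by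
  set lf := nhdsWithin (1:ℝ) (Set.Iio 1) with hlf
  set ψf : ℝ → ℝ := fun r => logPlus (logPlus (maxMod f r)) with hψf
  set ψk : ℝ → ℝ := fun r => logPlus (logPlus (maxMod (iteratedDeriv k f) r)) with hψk
  -- Direction 1: order of the derivative is at most that of f
  have dir1 := master (u := ψk) (v := ψf)
    (E := fun r => logPlus (Real.log (k.factorial) + (k:ℝ) * Real.log (2 / (1 - r))) + Real.log 2)
    (m := fun r => (1 + r) / 2) (m' := fun σ => 2 * σ - 1)
    tendsto_m tendsto_m' (fun σ => by ring)
    (by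
      filter_upwards [ev_Ioo] with r hr
      have h1 : (1:ℝ) - (1 + r) / 2 = (1 - r) / 2 := by ring
      have h2 : LL ((1 + r) / 2) = Real.log (2 / (1 - r)) := by
        unfold LL
        rw [h1, one_div, inv_div]
      rw [h2, log_two_div hr]
      linarith)
    (fun r => lp_nonneg _) (fun r => lp_nonneg _)
    (by
      have hcomp := (tendsto_lp_aux (Real.log (k.factorial) + (k:ℝ) * Real.log 2) (Real.log 2) k).comp
        tendsto_L
      refine hcomp.congr' ?_
      filter_upwards [ev_Ioo] with r hr
      simp only [Function.comp]
      congr 2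
      rw [log_two_div hr]
      ring)
    (by
      filter_upwards [ev_Ioo] with r hr
      exact psi_deriv_le hf k hr)
  -- Direction 2: order of f is at most that of the derivative
  have dir2 := master (u := ψf) (v := ψk)
    (E := fun _ => logPlus (logPlus (∑ j ∈ Finset.range k, ‖iteratedDeriv j f 0‖)
          + Real.log 2) + Real.log 2)
    (m := id) (m' := id)
    tendsto_id tendsto_id (fun σ => rfl)
    (by
      refine Filter.Eventually.of_forall fun r => ?_
      simp only [id]
      linarith [Real.log_nonneg one_le_two])
    (fun r => lp_nonneg _) (fun r => lp_nonneg _)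
    (tendsto_const_nhds.div_atTop tendsto_L)
    (by
      filter_upwards [ev_Ioo] with r hr
      simpa only [id] using psi_fun_le hf k hr)
  have e1 : lowerOrder (iteratedDeriv k f)
      = Filter.liminf (fun r => ((ψk r / LL r : ℝ) : EReal)) lf := rfl
  have e2 : lowerOrder f = Filter.liminf (fun r => ((ψf r / LL r : ℝ) : EReal)) lf := rfl
  have e3 : upperOrder (iteratedDeriv k f)
      = Filter.limsup (fun r => ((ψk r / LL r : ℝ) : EReal)) lf := rfl
  have e4 : upperOrder f = Filter.limsup (fun r => ((ψf r / LL r : ℝ) : EReal)) lf := rfl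
  constructor
  · rw [e1, e2]; exact le_antisymm dir1.1 dir2.1
  · rw [e3, e4]; exact le_antisymm dir1.2 dir2.2
end
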